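/- arXiv:1309.2100 — 7 statements merged into one kernel-verified Lean document; each statement's English description precedes it below -/
import Mathlib

section
/- Let H₁ and H₂ be complex Hilbert spaces, A a bounded self-adjoint operator on H₁, C a bounded self-adjoint operator on H₂, B a bounded operator from H₂ to H₁, and let M be the block operator matrix on H₁ ⊕ H₂ given by M(x,y) = (Ax + By, B*x + Cy). If λ ∈ ℝ belongs to σ(M) but not to σ(C), then dist[λ, σ(A)] ≤ ‖B‖² / dist[λ, σ(C)]. -/
open ContinuousLinearMap

variable {H₁ H₂ : Type*}
  [NormedAddCommGroup H₁] [InnerProductSpace ℂ H₁] [CompleteSpace H₁]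
  [NormedAddCommGroup H₂] [InnerProductSpace ℂ H₂] [CompleteSpace H₂]

/-- The block operator matrix `M(x,y) = (A x + B y, B* x + C y)` on the Hilbert-space
direct sum `H₁ ⊕ H₂` (realised as `WithLp 2 (H₁ × H₂)`). -/
noncomputable def blockOp (A : H₁ →L[ℂ] H₁) (B : H₂ →L[ℂ] H₁) (C : H₂ →L[ℂ] H₂) :
    WithLp 2 (H₁ × H₂) →L[ℂ] WithLp 2 (H₁ × H₂) :=
  (((WithLp.prodContinuousLinearEquiv 2 ℂ H₁ H₂).symm :
      (H₁ × H₂) →L[ℂ] WithLp 2 (H₁ × H₂)) ∘L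
    ((A ∘L ContinuousLinearMap.fst ℂ H₁ H₂ + B ∘L ContinuousLinearMap.snd ℂ H₁ H₂).prod
      ((ContinuousLinearMap.adjoint B) ∘L ContinuousLinearMap.fst ℂ H₁ H₂
        + C ∘L ContinuousLinearMap.snd ℂ H₁ H₂))) ∘L
    ((WithLp.prodContinuousLinearEquiv 2 ℂ H₁ H₂) :
      WithLp 2 (H₁ × H₂) →L[ℂ] (H₁ × H₂))

section Aux

lemma resolvent_norm_le' {H : Type*} [NormedAddCommGroup H] [InnerProductSpace ℂ H]
    [CompleteSpace H] (T : H →L[ℂ] H) (hT : IsSelfAdjoint T) (lam : ℝ)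
    (hlam : lam ∉ spectrum ℝ T) (hd : 0 < Metric.infDist lam (spectrum ℝ T))
    (u : (H →L[ℂ] H)ˣ) (hu : (u : H →L[ℂ] H) = algebraMap ℝ (H →L[ℂ] H) lam - T) :
    ‖((u⁻¹ : _ˣ) : H →L[ℂ] H)‖ ≤ (Metric.infDist lam (spectrum ℝ T))⁻¹ := by
  set d := Metric.infDist lam (spectrum ℝ T) with hdef
  have hne : ∀ t ∈ spectrum ℝ T, lam - t ≠ 0 := by
    intro t ht h
    exact hlam (by rwa [sub_eq_zero.mp h])
  have hcont : ContinuousOn (fun t : ℝ => (lam - t)⁻¹) (spectrum ℝ T) :=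
    ContinuousOn.inv₀ (by fun_prop) hne
  have hrepr : cfc (fun t : ℝ => lam - t) T = algebraMap ℝ (H →L[ℂ] H) lam - T := by
    rw [cfc_sub (fun _ : ℝ => lam) (fun t : ℝ => t) T (by fun_prop) (by fun_prop),
      cfc_const lam T hT, cfc_id' ℝ T hT]
  have hmul : (algebraMap ℝ (H →L[ℂ] H) lam - T) * cfc (fun t : ℝ => (lam - t)⁻¹) T = 1 := by
    rw [← hrepr, ← cfc_mul _ _ T (by fun_prop) hcont,
      cfc_congr (g := fun _ : ℝ => (1 : ℝ)) (fun t ht => mul_inv_cancel₀ (hne t ht)),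
      cfc_const (1 : ℝ) T hT, map_one]
  have hinv : ((u⁻¹ : _ˣ) : H →L[ℂ] H) = cfc (fun t : ℝ => (lam - t)⁻¹) T := by
    apply Units.inv_eq_of_mul_eq_one_right
    rw [hu]; exact hmul
  rw [hinv]
  apply norm_cfc_le (by positivity)
  intro t ht
  rw [Real.norm_eq_abs, abs_inv]
  apply inv_anti₀ hd
  calc d ≤ dist lam t := Metric.infDist_le_dist_of_mem ht
    _ = |lam - t| := by rw [Real.dist_eq]

lemma one_comp' {E F : Type*} [NormedAddCommGroup E] [NormedSpace ℂ E]
    [NormedAddCommGroup F] [NormedSpace ℂ F] (f : E →L[ℂ] F) :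
    (1 : F →L[ℂ] F) ∘L f = f := by ext x; rfl

lemma comp_one' {E F : Type*} [NormedAddCommGroup E] [NormedSpace ℂ E]
    [NormedAddCommGroup F] [NormedSpace ℂ F] (f : E →L[ℂ] F) :
    f ∘L (1 : E →L[ℂ] E) = f := by ext x; rfl

noncomputable def block4 (P : H₁ →L[ℂ] H₁) (Q : H₂ →L[ℂ] H₁) (Q' : H₁ →L[ℂ] H₂)
    (R : H₂ →L[ℂ] H₂) : WithLp 2 (H₁ × H₂) →L[ℂ] WithLp 2 (H₁ × H₂) :=
  (((WithLp.prodContinuousLinearEquiv 2 ℂ H₁ H₂).symm :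
      (H₁ × H₂) →L[ℂ] WithLp 2 (H₁ × H₂)) ∘L
    ((P ∘L ContinuousLinearMap.fst ℂ H₁ H₂ + Q ∘L ContinuousLinearMap.snd ℂ H₁ H₂).prod
      (Q' ∘L ContinuousLinearMap.fst ℂ H₁ H₂ + R ∘L ContinuousLinearMap.snd ℂ H₁ H₂))) ∘L
    ((WithLp.prodContinuousLinearEquiv 2 ℂ H₁ H₂) :
      WithLp 2 (H₁ × H₂) →L[ℂ] (H₁ × H₂))

lemma block4_apply' (P : H₁ →L[ℂ] H₁) (Q : H₂ →L[ℂ] H₁) (Q' : H₁ →L[ℂ] H₂)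
    (R : H₂ →L[ℂ] H₂) (x : WithLp 2 (H₁ × H₂)) :
    (WithLp.prodContinuousLinearEquiv 2 ℂ H₁ H₂) (block4 P Q Q' R x) =
      (P ((WithLp.prodContinuousLinearEquiv 2 ℂ H₁ H₂ x).1)
          + Q ((WithLp.prodContinuousLinearEquiv 2 ℂ H₁ H₂ x).2),
        Q' ((WithLp.prodContinuousLinearEquiv 2 ℂ H₁ H₂ x).1)
          + R ((WithLp.prodContinuousLinearEquiv 2 ℂ H₁ H₂ x).2)) := rfl

lemma block4_comp (P P₂ : H₁ →L[ℂ] H₁) (Q Q₂ : H₂ →L[ℂ] H₁) (Q' Q₂' : H₁ →L[ℂ] H₂)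
    (R R₂ : H₂ →L[ℂ] H₂) :
    block4 P Q Q' R * block4 P₂ Q₂ Q₂' R₂ =
      block4 (P ∘L P₂ + Q ∘L Q₂') (P ∘L Q₂ + Q ∘L R₂) (Q' ∘L P₂ + R ∘L Q₂')
        (Q' ∘L Q₂ + R ∘L R₂) := by
  ext x
  apply (WithLp.prodContinuousLinearEquiv 2 ℂ H₁ H₂).injective
  rw [ContinuousLinearMap.mul_apply, block4_apply', block4_apply', block4_apply', Prod.ext_iff]
  constructor <;> · simp; abel

lemma block4_one : block4 (1 : H₁ →L[ℂ] H₁) (0 : H₂ →L[ℂ] H₁) (0 : H₁ →L[ℂ] H₂)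
    (1 : H₂ →L[ℂ] H₂) = 1 := by
  ext x
  apply (WithLp.prodContinuousLinearEquiv 2 ℂ H₁ H₂).injective
  rw [block4_apply', Prod.ext_iff]
  simp

lemma block4_isUnit (P : H₁ →L[ℂ] H₁) (Q : H₂ →L[ℂ] H₁) (Q' : H₁ →L[ℂ] H₂)
    (uR : (H₂ →L[ℂ] H₂)ˣ) (uS : (H₁ →L[ℂ] H₁)ˣ)
    (hS : (uS : H₁ →L[ℂ] H₁) = P - Q ∘L ((uR⁻¹ : _ˣ) : H₂ →L[ℂ] H₂) ∘L Q') :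
    IsUnit (block4 P Q Q' (uR : H₂ →L[ℂ] H₂)) := by
  set Ri : H₂ →L[ℂ] H₂ := ((uR⁻¹ : _ˣ) : H₂ →L[ℂ] H₂) with hRi
  have hRRi : (uR : H₂ →L[ℂ] H₂) ∘L Ri = 1 := uR.mul_inv
  have hRiR : Ri ∘L (uR : H₂ →L[ℂ] H₂) = 1 := uR.inv_mul
  have hSSi : (uS : H₁ →L[ℂ] H₁) ∘L ((uS⁻¹ : _ˣ) : H₁ →L[ℂ] H₁) = 1 := uS.mul_inv
  have hSiS : ((uS⁻¹ : _ˣ) : H₁ →L[ℂ] H₁) ∘L (uS : H₁ →L[ℂ] H₁) = 1 := uS.inv_mul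
  have hU : ∀ X : H₂ →L[ℂ] H₁, block4 1 X 0 1 * block4 1 (-X) 0 1 = 1 := fun X => by
    rw [block4_comp]
    simp only [one_comp', comp_one', zero_comp, comp_zero, add_zero, zero_add, neg_comp,
      neg_add_cancel, add_neg_cancel, neg_zero]
    exact block4_one
  have hL : ∀ Y : H₁ →L[ℂ] H₂, block4 1 0 Y 1 * block4 1 0 (-Y) 1 = 1 := fun Y => by
    rw [block4_comp]
    simp only [one_comp', comp_one', zero_comp, comp_zero, add_zero, zero_add, comp_neg,
      neg_add_cancel, add_neg_cancel, neg_zero]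
    exact block4_one
  have uU : IsUnit (block4 (1 : H₁ →L[ℂ] H₁) (Q ∘L Ri) 0 1) :=
    ⟨⟨_, block4 1 (-(Q ∘L Ri)) 0 1, hU _, by simpa using hU (-(Q ∘L Ri))⟩, rfl⟩
  have uL : IsUnit (block4 (1 : H₁ →L[ℂ] H₁) 0 (Ri ∘L Q') 1) :=
    ⟨⟨_, block4 1 0 (-(Ri ∘L Q')) 1, hL _, by simpa using hL (-(Ri ∘L Q'))⟩, rfl⟩
  have uD : IsUnit (block4 ((uS : H₁ →L[ℂ] H₁)) 0 0 ((uR : H₂ →L[ℂ] H₂))) := by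
    have hd1 : block4 ((uS : H₁ →L[ℂ] H₁)) 0 0 ((uR : H₂ →L[ℂ] H₂)) *
        block4 ((uS⁻¹ : _ˣ) : H₁ →L[ℂ] H₁) 0 0 Ri = 1 := by
      rw [block4_comp]
      simp only [zero_comp, comp_zero, add_zero, zero_add, hSSi, hRRi]
      exact block4_one
    have hd2 : block4 ((uS⁻¹ : _ˣ) : H₁ →L[ℂ] H₁) 0 0 Ri *
        block4 ((uS : H₁ →L[ℂ] H₁)) 0 0 ((uR : H₂ →L[ℂ] H₂)) = 1 := by
      rw [block4_comp]
      simp only [zero_comp, comp_zero, add_zero, zero_add, hSiS, hRiR]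
      exact block4_one
    exact ⟨⟨_, _, hd1, hd2⟩, rfl⟩
  have h1 : (uR : H₂ →L[ℂ] H₂) ∘L (Ri ∘L Q') = Q' := by
    rw [← comp_assoc, hRRi, one_comp']
  have hfact : block4 (1 : H₁ →L[ℂ] H₁) (Q ∘L Ri) 0 1 *
      (block4 ((uS : H₁ →L[ℂ] H₁)) 0 0 ((uR : H₂ →L[ℂ] H₂)) *
        block4 (1 : H₁ →L[ℂ] H₁) 0 (Ri ∘L Q') 1) = block4 P Q Q' (uR : H₂ →L[ℂ] H₂) := by
    rw [block4_comp, block4_comp]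
    simp only [one_comp', comp_one', zero_comp, comp_zero, add_zero, zero_add]
    congr 1
    · rw [h1, comp_assoc, hS, sub_add_cancel]
    · rw [comp_assoc, hRiR, comp_one']
  exact hfact ▸ (uU.mul (uD.mul uL))

lemma algebraMap_sub_blockOp (A : H₁ →L[ℂ] H₁) (B : H₂ →L[ℂ] H₁) (C : H₂ →L[ℂ] H₂) (lam : ℝ) :
    algebraMap ℝ (WithLp 2 (H₁ × H₂) →L[ℂ] WithLp 2 (H₁ × H₂)) lam - blockOp A B C =
      block4 (algebraMap ℝ (H₁ →L[ℂ] H₁) lam - A) (-B) (-(ContinuousLinearMap.adjoint B))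
        (algebraMap ℝ (H₂ →L[ℂ] H₂) lam - C) := by
  have hb : blockOp A B C = block4 A B (ContinuousLinearMap.adjoint B) C := rfl
  have hsm : ∀ (r : ℝ) (y : WithLp 2 (H₁ × H₂)),
      (WithLp.prodContinuousLinearEquiv 2 ℂ H₁ H₂) (r • y) =
        r • (WithLp.prodContinuousLinearEquiv 2 ℂ H₁ H₂) y := fun _ _ => rfl
  ext x
  apply (WithLp.prodContinuousLinearEquiv 2 ℂ H₁ H₂).injective
  rw [hb, ContinuousLinearMap.sub_apply, map_sub, block4_apply', block4_apply', Prod.ext_iff]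
  simp only [Algebra.algebraMap_eq_smul_one, ContinuousLinearMap.smul_apply,
    ContinuousLinearMap.one_apply, map_smul, hsm, ContinuousLinearMap.sub_apply,
    ContinuousLinearMap.neg_apply, Prod.fst_sub, Prod.snd_sub, Prod.smul_fst, Prod.smul_snd]
  constructor <;> abel

end Aux

/-- If `λ ∈ σ(M) \ σ(C)` then `dist[λ, σ(A)] ≤ ‖B‖² / dist[λ, σ(C)]`. -/
theorem spectral_enclosure_bounded (A : H₁ →L[ℂ] H₁) (hA : IsSelfAdjoint A)
    (C : H₂ →L[ℂ] H₂) (hC : IsSelfAdjoint C) (B : H₂ →L[ℂ] H₁) (lam : ℝ)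
    (hlamM : lam ∈ spectrum ℝ (blockOp A B C))
    (hlamC : lam ∉ spectrum ℝ C) :
    Metric.infDist lam (spectrum ℝ A) ≤ ‖B‖ ^ 2 / Metric.infDist lam (spectrum ℝ C) := by
  have hCu : IsUnit (algebraMap ℝ (H₂ →L[ℂ] H₂) lam - C) := spectrum.notMem_iff.mp hlamC
  set Ri : H₂ →L[ℂ] H₂ := ((hCu.unit⁻¹ : _ˣ) : H₂ →L[ℂ] H₂) with hRidef
  set K : H₁ →L[ℂ] H₁ := B ∘L Ri ∘L ContinuousLinearMap.adjoint B with hKdef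
  -- the Schur complement is not invertible
  have hSnot : ¬ IsUnit (algebraMap ℝ (H₁ →L[ℂ] H₁) lam - A - K) := by
    intro h
    have hSeq : (h.unit : H₁ →L[ℂ] H₁) = (algebraMap ℝ (H₁ →L[ℂ] H₁) lam - A) -
        (-B) ∘L ((hCu.unit⁻¹ : _ˣ) : H₂ →L[ℂ] H₂) ∘L (-(ContinuousLinearMap.adjoint B)) := by
      rw [IsUnit.unit_spec]
      simp [hKdef, hRidef, comp_neg, neg_comp, neg_neg]
    have h2 := block4_isUnit (algebraMap ℝ (H₁ →L[ℂ] H₁) lam - A) (-B)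
      (-(ContinuousLinearMap.adjoint B)) hCu.unit h.unit hSeq
    rw [hCu.unit_spec, ← algebraMap_sub_blockOp] at h2
    exact spectrum.mem_iff.mp hlamM h2
  rcases subsingleton_or_nontrivial H₂ with hsub | hnt
  · -- trivial `H₂`: then `B = 0` and `λ ∈ σ(A)`
    have hB : B = 0 := by ext x; rw [Subsingleton.elim x (0 : H₂)]; simp
    have hnu : ¬ IsUnit (algebraMap ℝ (H₁ →L[ℂ] H₁) lam - A) := by
      simpa [hKdef, hB] using hSnot
    rw [Metric.infDist_zero_of_mem (spectrum.mem_iff.mpr hnu)]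
    exact div_nonneg (by positivity) Metric.infDist_nonneg
  · -- nontrivial `H₂`
    have hnt' : Nontrivial (H₂ →L[ℂ] H₂) := by
      obtain ⟨y, hy⟩ := exists_ne (0 : H₂)
      exact ⟨1, 0, fun h => hy (by simpa using congrFun (congrArg DFunLike.coe h) y)⟩
    have hCne : (spectrum ℝ C).Nonempty := hC.spectrum_nonempty
    have hdC : 0 < Metric.infDist lam (spectrum ℝ C) := by
      exact ((spectrum.isClosed (𝕜 := ℝ) C).notMem_iff_infDist_pos hCne).mp hlamC
    set dC := Metric.infDist lam (spectrum ℝ C) with hdCdef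
    have hRi : ‖Ri‖ ≤ dC⁻¹ :=
      resolvent_norm_le' C hC lam hlamC hdC hCu.unit hCu.unit_spec
    have hK : ‖K‖ ≤ ‖B‖ ^ 2 / dC := by
      calc ‖K‖ ≤ ‖B‖ * ‖Ri ∘L ContinuousLinearMap.adjoint B‖ := opNorm_comp_le _ _
        _ ≤ ‖B‖ * (‖Ri‖ * ‖ContinuousLinearMap.adjoint B‖) := by
            gcongr; exact opNorm_comp_le _ _
        _ = ‖B‖ * ‖Ri‖ * ‖B‖ := by
            rw [show ‖ContinuousLinearMap.adjoint B‖ = ‖B‖ from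
              (ContinuousLinearMap.adjoint : (H₂ →L[ℂ] H₁) ≃ₗᵢ⋆[ℂ] (H₁ →L[ℂ] H₂)).norm_map B]
            ring
        _ ≤ ‖B‖ * dC⁻¹ * ‖B‖ := by gcongr
        _ = ‖B‖ ^ 2 / dC := by ring
    by_contra hcon
    push_neg at hcon
    set dA := Metric.infDist lam (spectrum ℝ A) with hdAdef
    have hr : 0 ≤ ‖B‖ ^ 2 / dC := by positivity
    have hdA : 0 < dA := lt_of_le_of_lt hr hcon
    have hlamA : lam ∉ spectrum ℝ A := by
      intro hmem
      rw [hdAdef, Metric.infDist_zero_of_mem hmem] at hdA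
      exact lt_irrefl _ hdA
    have hAu : IsUnit (algebraMap ℝ (H₁ →L[ℂ] H₁) lam - A) := spectrum.notMem_iff.mp hlamA
    have hAi : ‖((hAu.unit⁻¹ : _ˣ) : H₁ →L[ℂ] H₁)‖ ≤ dA⁻¹ :=
      resolvent_norm_le' A hA lam hlamA hdA hAu.unit hAu.unit_spec
    have hsmall : ‖((hAu.unit⁻¹ : _ˣ) : H₁ →L[ℂ] H₁) * K‖ < 1 := by
      calc ‖((hAu.unit⁻¹ : _ˣ) : H₁ →L[ℂ] H₁) * K‖
          ≤ ‖((hAu.unit⁻¹ : _ˣ) : H₁ →L[ℂ] H₁)‖ * ‖K‖ := norm_mul_le _ _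
        _ ≤ dA⁻¹ * (‖B‖ ^ 2 / dC) := by gcongr
        _ < dA⁻¹ * dA := by gcongr
        _ = 1 := inv_mul_cancel₀ (ne_of_gt hdA)
    have hfac : algebraMap ℝ (H₁ →L[ℂ] H₁) lam - A - K =
        (hAu.unit : H₁ →L[ℂ] H₁) * (1 - ((hAu.unit⁻¹ : _ˣ) : H₁ →L[ℂ] H₁) * K) := by
      rw [mul_sub, mul_one, ← mul_assoc, hAu.unit.mul_inv, one_mul, hAu.unit_spec]
    exact hSnot (hfac ▸ (hAu.unit.isUnit.mul (Units.oneSub _ hsmall).isUnit))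
end

section
/- (Theorem 2.1, bounded-entry case.) Suppose a, b ≥ 0 satisfy ‖B*x‖² ≤ a·Re⟨Ax, x⟩ + b·‖x‖² for all x ∈ H₁. If λ ∈ ℝ belongs to σ(M) and dist[λ, σ(C)] > a, then dist[λ, σ(A)] ≤ |aλ + b| / (dist[λ, σ(C)] − a). -/
open ContinuousLinearMap

variable {H₁ H₂ : Type*}
  [NormedAddCommGroup H₁] [InnerProductSpace ℂ H₁] [CompleteSpace H₁]
  [NormedAddCommGroup H₂] [InnerProductSpace ℂ H₂] [CompleteSpace H₂]

section Aux

variable {H : Type*} [NormedAddCommGroup H] [InnerProductSpace ℂ H] [CompleteSpace H]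

lemma aux_inner_nonneg (T : H →L[ℂ] H) (hT : 0 ≤ T) (x : H) : 0 ≤ (inner ℂ (T x) x : ℂ).re := by
  simpa using (Complex.le_def.mp (((ContinuousLinearMap.nonneg_iff_isPositive T).mp hT).inner_nonneg_left x)).1

lemma re_inner_real_smul_left (r : ℝ) (x : H) : (inner ℂ (r • x) x : ℂ).re = r * ‖x‖ ^ 2 := by
  rw [RCLike.real_smul_eq_coe_smul (K := ℂ), inner_smul_left, inner_self_eq_norm_sq_to_K]
  simp only [RCLike.conj_ofReal]
  rw [← RCLike.ofReal_pow, ← RCLike.ofReal_mul]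
  exact RCLike.ofReal_re (K := ℂ) _

lemma sign_op_exists (T : H →L[ℂ] H) (hT : IsSelfAdjoint T) (lam d : ℝ) (hd : 0 < d)
    (hspec : ∀ t ∈ spectrum ℝ T, d ≤ |t - lam|) :
    ∃ J G : H →L[ℂ] H,
      (∀ x, ‖J x‖ = ‖x‖) ∧
      (∀ x, (inner ℂ (T (J x)) (J x) : ℂ).re = (inner ℂ (T x) x : ℂ).re) ∧
      (∀ x, (inner ℂ (T x - lam • x) (J x) : ℂ) = inner ℂ (G x) x) ∧
      (∀ x, d * ‖x‖ ^ 2 ≤ (inner ℂ (G x) x : ℂ).re) ∧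
      (∀ x, (inner ℂ (T x - lam • x) x : ℂ).re ≤ (inner ℂ (G x) x : ℂ).re) := by
  set f : ℝ → ℝ := fun t => if t < lam then -1 else 1 with hf
  have hfc : ContinuousOn f (spectrum ℝ T) := by
    intro t ht
    apply ContinuousAt.continuousWithinAt
    have hne : t ≠ lam := by
      intro h; have := hspec t ht; rw [h] at this; simp at this; linarith
    rcases lt_or_gt_of_ne hne with h | h
    · have : f =ᶠ[nhds t] fun _ => -1 := by
        filter_upwards [IsOpen.mem_nhds isOpen_Iio h] with s hs
        simp [hf, Set.mem_Iio.mp hs]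
      exact this.continuousAt
    · have : f =ᶠ[nhds t] fun _ => 1 := by
        filter_upwards [IsOpen.mem_nhds isOpen_Ioi h] with s hs
        simp only [hf]
        rw [if_neg (not_lt.mpr (le_of_lt (Set.mem_Ioi.mp hs)))]
      exact this.continuousAt
  have hgc : ContinuousOn (fun t : ℝ => |t - lam|) (spectrum ℝ T) :=
    ((continuous_id.sub continuous_const).abs).continuousOn
  set J : H →L[ℂ] H := cfc f T with hJ
  set G : H →L[ℂ] H := cfc (fun t : ℝ => |t - lam|) T with hG
  have hJsa : IsSelfAdjoint J := cfc_predicate f T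
  have hJJ : J * J = 1 := by
    rw [hJ, ← cfc_mul f f T hfc hfc]
    have : cfc (fun t => f t * f t) T = cfc (fun _ : ℝ => (1:ℝ)) T := by
      apply cfc_congr; intro t _
      by_cases h : t < lam <;> simp [hf, h]
    rw [this, ← Pi.one_def, cfc_one ℝ T]
  have hnorm : ∀ x, ‖J x‖ = ‖x‖ := by
    intro x
    have h1 : (inner ℂ (J x) (J x) : ℂ) = inner ℂ x x := by
      rw [← ContinuousLinearMap.adjoint_inner_right, hJsa.adjoint_eq,
        ← ContinuousLinearMap.mul_apply, hJJ, ContinuousLinearMap.one_apply]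
    have h2 : ‖J x‖ ^ 2 = ‖x‖ ^ 2 := by
      rw [← inner_self_eq_norm_sq (𝕜 := ℂ), ← inner_self_eq_norm_sq (𝕜 := ℂ), h1]
    rw [← Real.sqrt_sq (norm_nonneg (J x)), ← Real.sqrt_sq (norm_nonneg x), h2]
  have hid : cfc (id : ℝ → ℝ) T = T := cfc_id ℝ T hT
  have hJTJ : J * T * J = T := by
    calc J * T * J = cfc f T * cfc (id : ℝ → ℝ) T * cfc f T := by rw [hid]
      _ = cfc (fun t => f t * id t) T * cfc f T := by
          rw [cfc_mul f id T hfc continuousOn_id]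
      _ = cfc (fun t => (f t * id t) * f t) T := by
          rw [cfc_mul (fun t => f t * id t) f T (hfc.mul continuousOn_id) hfc]
      _ = cfc (id : ℝ → ℝ) T := by
          apply cfc_congr; intro t _
          by_cases h : t < lam <;> simp [hf, h]
      _ = T := hid
  have hconst : ∀ r : ℝ, cfc (fun _ : ℝ => r) T = algebraMap ℝ (H →L[ℂ] H) r :=
    fun r => cfc_const r T hT
  have hsub : cfc (fun t : ℝ => t - lam) T = T - lam • (1 : H →L[ℂ] H) := by
    rw [cfc_sub (fun t : ℝ => t) (fun _ => lam) T (by fun_prop) (by fun_prop), cfc_id' ℝ T hT,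
      hconst, Algebra.algebraMap_eq_smul_one]
  have hmove : ∀ u v : H, (inner ℂ (J u) v : ℂ) = inner ℂ u (J v) := by
    intro u v
    nth_rewrite 1 [← hJsa.adjoint_eq]
    exact ContinuousLinearMap.adjoint_inner_left J v u
  have hJT'G : J * (T - lam • (1 : H →L[ℂ] H)) = G := by
    calc J * (T - lam • (1 : H →L[ℂ] H)) = cfc f T * cfc (fun t : ℝ => t - lam) T := by
          rw [hsub]
      _ = cfc (fun t => f t * (t - lam)) T := by
          rw [cfc_mul f (fun t : ℝ => t - lam) T hfc (by fun_prop)]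
      _ = G := by
          rw [hG]; apply cfc_congr; intro t _
          by_cases h : t < lam
          · rw [hf]; simp only [if_pos h]
            rw [abs_of_neg (by linarith : t - lam < 0)]; ring
          · rw [hf]; simp only [if_neg h]
            rw [abs_of_nonneg (by push_neg at h; linarith : (0:ℝ) ≤ t - lam)]; ring
  have happly : ∀ x, (T - lam • (1 : H →L[ℂ] H)) x = T x - lam • x := by
    intro x; rw [ContinuousLinearMap.sub_apply, ContinuousLinearMap.smul_apply,
      ContinuousLinearMap.one_apply]
  have hiii : ∀ x, (inner ℂ (T x - lam • x) (J x) : ℂ) = inner ℂ (G x) x := by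
    intro x
    rw [← happly, ← hmove ((T - lam • (1 : H →L[ℂ] H)) x) x]
    have : J ((T - lam • (1 : H →L[ℂ] H)) x) = (J * (T - lam • (1 : H →L[ℂ] H))) x := rfl
    rw [this, hJT'G]
  have hii : ∀ x, (inner ℂ (T (J x)) (J x) : ℂ) = inner ℂ (T x) x := by
    intro x
    rw [← hmove (T (J x)) x]
    have : J (T (J x)) = (J * T * J) x := rfl
    rw [this, hJTJ]
  have hsmulre : ∀ (r : ℝ) (x : H), (inner ℂ (r • x) x : ℂ).re = r * ‖x‖ ^ 2 :=
    re_inner_real_smul_left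
  have hiv : ∀ x, d * ‖x‖ ^ 2 ≤ (inner ℂ (G x) x : ℂ).re := by
    intro x
    have h0 : (0 : H →L[ℂ] H) ≤ cfc (fun t : ℝ => |t - lam| - d) T := by
      apply cfc_nonneg; intro t ht; have := hspec t ht; linarith
    rw [cfc_sub _ _ T hgc continuousOn_const, hconst] at h0
    have h1 := aux_inner_nonneg _ h0 x
    rw [ContinuousLinearMap.sub_apply, inner_sub_left, Complex.sub_re] at h1
    have h2 : ((algebraMap ℝ (H →L[ℂ] H) d) x) = d • x := by
      rw [Algebra.algebraMap_eq_smul_one, ContinuousLinearMap.smul_apply,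
        ContinuousLinearMap.one_apply]
    rw [h2, hsmulre] at h1
    linarith
  have hv : ∀ x, (inner ℂ (T x - lam • x) x : ℂ).re ≤ (inner ℂ (G x) x : ℂ).re := by
    intro x
    have h0 : (0 : H →L[ℂ] H) ≤ cfc (fun t : ℝ => |t - lam| - (t - lam)) T := by
      apply cfc_nonneg; intro t _; simp [le_abs_self]
    rw [cfc_sub (fun t : ℝ => |t - lam|) (fun t : ℝ => t - lam) T hgc (by fun_prop), hsub] at h0
    have h1 := aux_inner_nonneg _ h0 x
    rw [ContinuousLinearMap.sub_apply, inner_sub_left, Complex.sub_re, happly] at h1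
    rw [← hG] at h1
    linarith
  exact ⟨J, G, hnorm, fun x => congrArg Complex.re (hii x), hiii, hiv, hv⟩

lemma isUnit_of_bddBelow (T : H →L[ℂ] H) (hT : IsSelfAdjoint T) (c : ℝ) (hc : 0 < c)
    (hbd : ∀ z, c * ‖z‖ ≤ ‖T z‖) : IsUnit T := by
  have hanti : AntilipschitzWith (⟨c, hc.le⟩ : NNReal)⁻¹ T := by
    apply ContinuousLinearMap.antilipschitz_of_bound
    intro x
    change ‖x‖ ≤ c⁻¹ * ‖T x‖
    rw [inv_mul_eq_div, le_div_iff₀ hc, mul_comm]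
    exact hbd x
  have hker : LinearMap.ker (T : H →ₗ[ℂ] H) = ⊥ := by
    rw [LinearMap.ker_eq_bot']
    intro m hm
    have := hbd m
    rw [show T m = 0 from hm, norm_zero] at this
    have : ‖m‖ = 0 := le_antisymm (by nlinarith) (norm_nonneg m)
    simpa using this
  have hclosed : IsClosed (LinearMap.range (T : H →ₗ[ℂ] H) : Set H) := by
    rw [LinearMap.coe_range]
    exact hanti.isClosed_range T.uniformContinuous
  have : CompleteSpace (LinearMap.range (T : H →ₗ[ℂ] H)) := hclosed.completeSpace_coe
  have horth : (LinearMap.range (T : H →ₗ[ℂ] H))ᗮ = ⊥ := by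
    rw [Submodule.eq_bot_iff]
    intro u hu
    have hTu : T u = 0 := by
      have h1 : (inner ℂ (T (T u)) u : ℂ) = 0 :=
        hu (T (T u)) (LinearMap.mem_range_self _ _)
      have h3 := ContinuousLinearMap.adjoint_inner_left T u (T u)
      rw [hT.adjoint_eq] at h3
      have h2 : (inner ℂ (T u) (T u) : ℂ) = 0 := by rw [← h3]; exact h1
      simpa using inner_self_eq_zero.mp h2
    have := hbd u
    rw [hTu, norm_zero] at this
    have : ‖u‖ = 0 := le_antisymm (by nlinarith) (norm_nonneg u)
    simpa using this
  have hrange : LinearMap.range (T : H →ₗ[ℂ] H) = ⊤ := Submodule.orthogonal_eq_bot_iff.mp horth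
  let e := ContinuousLinearEquiv.ofBijective T hker hrange
  have he : ∀ x, e x = T x := fun _ => rfl
  refine isUnit_iff_exists.mpr ⟨(e.symm : H →L[ℂ] H), ?_, ?_⟩ <;> ext z
  · show T (e.symm z) = z
    rw [← he]; exact e.apply_symm_apply z
  · show e.symm (T z) = z
    rw [← he]; exact e.symm_apply_apply z

end Aux


lemma arith_key (a b lam dA δ ε c g N1 u t s Q : ℝ)
    (ha : 0 ≤ a) (hN1 : 0 ≤ N1) (hu : 0 ≤ u) (ht : 0 ≤ t)
    (hθ0 : 0 < δ - ε) (hθa : a < δ - ε)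
    (hgdef : g = dA * (δ - a) - |a * lam + b|)
    (hsdef : s = a * Q + (a * lam + b) * N1)
    (ht2 : t ^ 2 = s)
    (hQd : dA * N1 ≤ Q)
    (hdε : dA * ε ≤ g / 2)
    (hcδ : c * δ ≤ g / 2)
    (hcε : c ≤ ε) (hc0 : 0 < c) (hε0 : 0 < ε) :
    c * (N1 + u ^ 2) ≤ Q + δ * u ^ 2 - 2 * (u * t) := by
  have h1 : 2 * (u * t) * (δ - ε) ≤ (δ - ε) ^ 2 * u ^ 2 + s := by
    nlinarith [sq_nonneg ((δ - ε) * u - t), ht2]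
  have hQ' : (δ - ε - a) * (dA * N1) ≤ (δ - ε - a) * Q :=
    mul_le_mul_of_nonneg_left hQd (by linarith)
  have habs : a * lam + b ≤ |a * lam + b| := le_abs_self _
  have hcoef : g / 2 ≤ (δ - ε - a) * dA - (a * lam + b) := by nlinarith [hdε, habs, hgdef]
  have hmul : (g / 2) * N1 ≤ ((δ - ε - a) * dA - (a * lam + b)) * N1 :=
    mul_le_mul_of_nonneg_right hcoef hN1
  have step2 : (g / 2) * N1 ≤ (δ - ε) * Q - s := by
    have hrw : ((δ - ε - a) * dA - (a * lam + b)) * N1 =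
        (δ - ε - a) * (dA * N1) - (a * lam + b) * N1 := by ring
    rw [hrw] at hmul
    linarith [hmul, hQ', hsdef]
  have h3 : (g / 2) * N1 + ((δ - ε) * ε) * u ^ 2 ≤ (δ - ε) * (Q + δ * u ^ 2 - 2 * (u * t)) := by
    have expand : (δ - ε) * (Q + δ * u ^ 2 - 2 * (u * t)) =
        ((δ - ε) * Q - s) + (δ - ε) * ε * u ^ 2 +
        ((δ - ε) ^ 2 * u ^ 2 + s - 2 * (u * t) * (δ - ε)) := by ring
    rw [expand]
    linarith [h1, step2]
  have e1 : c * (δ - ε) ≤ g / 2 := by nlinarith [hcδ, mul_nonneg hc0.le hε0.le]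
  have e2 : c * (δ - ε) ≤ ε * (δ - ε) := mul_le_mul_of_nonneg_right hcε hθ0.le
  have h2 : (δ - ε) * (c * (N1 + u ^ 2)) ≤ (g / 2) * N1 + ((δ - ε) * ε) * u ^ 2 := by
    have f1 : (c * (δ - ε)) * N1 ≤ (g / 2) * N1 := mul_le_mul_of_nonneg_right e1 hN1
    have f2 : (c * (δ - ε)) * u ^ 2 ≤ (ε * (δ - ε)) * u ^ 2 :=
      mul_le_mul_of_nonneg_right e2 (sq_nonneg u)
    nlinarith [f1, f2]
  exact (mul_le_mul_iff_right₀ hθ0).mp (le_trans h2 h3)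

lemma blockOp_fst (A : H₁ →L[ℂ] H₁) (B : H₂ →L[ℂ] H₁) (C : H₂ →L[ℂ] H₂)
    (z : WithLp 2 (H₁ × H₂)) : (blockOp A B C z).fst = A z.fst + B z.snd := rfl

lemma blockOp_snd (A : H₁ →L[ℂ] H₁) (B : H₂ →L[ℂ] H₁) (C : H₂ →L[ℂ] H₂)
    (z : WithLp 2 (H₁ × H₂)) : (blockOp A B C z).snd = adjoint B z.fst + C z.snd := rfl

set_option synthInstance.maxHeartbeats 400000 in
lemma blockOp_isSelfAdjoint (A : H₁ →L[ℂ] H₁) (hA : IsSelfAdjoint A)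
    (C : H₂ →L[ℂ] H₂) (hC : IsSelfAdjoint C) (B : H₂ →L[ℂ] H₁) :
    IsSelfAdjoint (blockOp A B C) := by
  rw [ContinuousLinearMap.isSelfAdjoint_iff_isSymmetric]
  intro z w
  have hAs := (ContinuousLinearMap.isSelfAdjoint_iff_isSymmetric.mp hA)
  have hCs := (ContinuousLinearMap.isSelfAdjoint_iff_isSymmetric.mp hC)
  show (inner ℂ (blockOp A B C z) w : ℂ) = inner ℂ z (blockOp A B C w)
  rw [WithLp.prod_inner_apply, WithLp.prod_inner_apply]
  change inner ℂ (blockOp A B C z).fst w.fst + inner ℂ (blockOp A B C z).snd w.snd =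
    inner ℂ z.fst (blockOp A B C w).fst + inner ℂ z.snd (blockOp A B C w).snd
  rw [blockOp_fst, blockOp_snd,
    blockOp_fst, blockOp_snd, inner_add_left, inner_add_left, inner_add_right, inner_add_right]
  have e1 : (inner ℂ (A z.fst) w.fst : ℂ) = inner ℂ z.fst (A w.fst) := hAs z.fst w.fst
  have e2 : (inner ℂ (C z.snd) w.snd : ℂ) = inner ℂ z.snd (C w.snd) := hCs z.snd w.snd
  have e3 : (inner ℂ (B z.snd) w.fst : ℂ) = inner ℂ z.snd (adjoint B w.fst) := by
    rw [← ContinuousLinearMap.adjoint_inner_right]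
  have e4 : (inner ℂ (adjoint B z.fst) w.snd : ℂ) = inner ℂ z.fst (B w.snd) := by
    rw [ContinuousLinearMap.adjoint_inner_left]
  rw [e1, e2, e3, e4]; ring

set_option maxHeartbeats 1000000 in
set_option synthInstance.maxHeartbeats 400000 in
/-- Theorem 2.1 (bounded-entry case): if `‖B* x‖² ≤ a Re⟪A x, x⟫ + b ‖x‖²` for all `x`,
`λ ∈ σ(M)` and `dist[λ, σ(C)] > a`, then
`dist[λ, σ(A)] ≤ |aλ + b| / (dist[λ, σ(C)] - a)`. -/
theorem spectral_enclosure_thm21 (A : H₁ →L[ℂ] H₁) (hA : IsSelfAdjoint A)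
    (C : H₂ →L[ℂ] H₂) (hC : IsSelfAdjoint C) (B : H₂ →L[ℂ] H₁)
    (a b : ℝ) (ha : 0 ≤ a) (hb : 0 ≤ b)
    (hab : ∀ x : H₁, ‖ContinuousLinearMap.adjoint B x‖ ^ 2 ≤
      a * (inner ℂ (A x) x : ℂ).re + b * ‖x‖ ^ 2)
    (lam : ℝ) (hlamM : lam ∈ spectrum ℝ (blockOp A B C))
    (hdist : a < Metric.infDist lam (spectrum ℝ C)) :
    Metric.infDist lam (spectrum ℝ A) ≤
      |a * lam + b| / (Metric.infDist lam (spectrum ℝ C) - a) := by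
  by_contra hcon
  push_neg at hcon
  set δ := Metric.infDist lam (spectrum ℝ C) with hδdef
  set dA := Metric.infDist lam (spectrum ℝ A) with hdAdef
  have hδa : 0 < δ - a := by linarith
  have hr0 : 0 ≤ |a * lam + b| / (δ - a) := div_nonneg (abs_nonneg _) hδa.le
  have hd0 : 0 < dA := lt_of_le_of_lt hr0 hcon
  have hδ0 : 0 < δ := lt_of_le_of_lt ha hdist
  have hg : |a * lam + b| < dA * (δ - a) := by
    rw [div_lt_iff₀ hδa] at hcon; linarith
  obtain ⟨g, hgdef⟩ : ∃ g : ℝ, g = dA * (δ - a) - |a * lam + b| := ⟨_, rfl⟩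
  have hg0 : 0 < g := by rw [hgdef]; linarith
  obtain ⟨ε, hεdef⟩ : ∃ ε : ℝ, ε = min (g / (2 * dA)) ((δ - a) / 2) := ⟨_, rfl⟩
  have hε0 : 0 < ε := by rw [hεdef]; exact lt_min (by positivity) (by linarith)
  have hεle : ε ≤ (δ - a) / 2 := by rw [hεdef]; exact min_le_right _ _
  have hθa : a < δ - ε := by linarith
  have hθ0 : 0 < δ - ε := by linarith
  have hdε : dA * ε ≤ g / 2 := by
    have h1 : ε ≤ g / (2 * dA) := by rw [hεdef]; exact min_le_left _ _
    rw [le_div_iff₀ (by positivity)] at h1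
    linarith [h1]
  obtain ⟨c, hcdef⟩ : ∃ c : ℝ, c = min (g / (2 * δ)) ε := ⟨_, rfl⟩
  have hc0 : 0 < c := by rw [hcdef]; exact lt_min (by positivity) hε0
  have hcδ : c * δ ≤ g / 2 := by
    have h1 : c ≤ g / (2 * δ) := by rw [hcdef]; exact min_le_left _ _
    rw [le_div_iff₀ (by positivity)] at h1
    linarith [h1]
  have hcε : c ≤ ε := by rw [hcdef]; exact min_le_right _ _
  have hspecA : ∀ t ∈ spectrum ℝ A, dA ≤ |t - lam| := by
    intro t ht
    have := Metric.infDist_le_dist_of_mem (x := lam) ht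
    rwa [Real.dist_eq, abs_sub_comm] at this
  have hspecC : ∀ t ∈ spectrum ℝ C, δ ≤ |t - lam| := by
    intro t ht
    have := Metric.infDist_le_dist_of_mem (x := lam) ht
    rwa [Real.dist_eq, abs_sub_comm] at this
  obtain ⟨J, GA, hJnorm, hJAA, hJinner, hGAd, hGAle⟩ := sign_op_exists A hA lam dA hd0 hspecA
  obtain ⟨K, GC, hKnorm, _, hKinner, hGCd, _⟩ := sign_op_exists C hC lam δ hδ0 hspecC
  set M := blockOp A B C with hM
  set T := lam • (1 : WithLp 2 (H₁ × H₂) →L[ℂ] WithLp 2 (H₁ × H₂)) - M with hTdef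
  have hTsa : IsSelfAdjoint T := by
    rw [hTdef, ← Algebra.algebraMap_eq_smul_one]
    exact IsSelfAdjoint.sub (R := WithLp 2 (H₁ × H₂) →L[ℂ] WithLp 2 (H₁ × H₂))
      (IsSelfAdjoint.algebraMap _ (.all lam))
      (blockOp_isSelfAdjoint A hA C hC B)
  have hbd : ∀ z, c * ‖z‖ ≤ ‖T z‖ := by
    intro z
    set x := z.fst with hx
    set y := z.snd with hy
    set w : WithLp 2 (H₁ × H₂) := (WithLp.equiv 2 (H₁ × H₂)).symm (J x, K y) with hw
    have hwfst : w.fst = J x := rfl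
    have hwsnd : w.snd = K y := rfl
    have hN1 : (0:ℝ) ≤ ‖x‖ ^ 2 := by positivity
    have hQd : dA * ‖x‖ ^ 2 ≤ (inner ℂ (GA x) x : ℂ).re := hGAd x
    have hAxle : (inner ℂ (A x) x : ℂ).re - lam * ‖x‖ ^ 2 ≤ (inner ℂ (GA x) x : ℂ).re := by
      have h1 := hGAle x
      rwa [inner_sub_left, Complex.sub_re, re_inner_real_smul_left] at h1
    have hBx : ‖adjoint B x‖ ^ 2 ≤
        a * (inner ℂ (GA x) x : ℂ).re + (a * lam + b) * ‖x‖ ^ 2 := by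
      have h0 := hab x
      have h2 : a * (inner ℂ (A x) x : ℂ).re ≤
          a * ((inner ℂ (GA x) x : ℂ).re + lam * ‖x‖ ^ 2) :=
        mul_le_mul_of_nonneg_left (by linarith only [hAxle]) ha
      linarith only [h0, h2]
    have hBJx : ‖adjoint B (J x)‖ ^ 2 ≤
        a * (inner ℂ (GA x) x : ℂ).re + (a * lam + b) * ‖x‖ ^ 2 := by
      have h0 := hab (J x)
      rw [hJAA x, hJnorm x] at h0
      have h2 : a * (inner ℂ (A x) x : ℂ).re ≤
          a * ((inner ℂ (GA x) x : ℂ).re + lam * ‖x‖ ^ 2) :=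
        mul_le_mul_of_nonneg_left (by linarith only [hAxle]) ha
      linarith only [h0, h2]
    have hs0 : (0:ℝ) ≤ a * (inner ℂ (GA x) x : ℂ).re + (a * lam + b) * ‖x‖ ^ 2 :=
      le_trans (by positivity : (0:ℝ) ≤ ‖adjoint B x‖ ^ 2) hBx
    set t := Real.sqrt (a * (inner ℂ (GA x) x : ℂ).re + (a * lam + b) * ‖x‖ ^ 2) with htdef
    have ht0 : 0 ≤ t := Real.sqrt_nonneg _
    have ht2 : t ^ 2 = a * (inner ℂ (GA x) x : ℂ).re + (a * lam + b) * ‖x‖ ^ 2 :=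
      Real.sq_sqrt hs0
    have htBx : ‖adjoint B x‖ ≤ t := by
      rw [htdef, ← Real.sqrt_sq (norm_nonneg (adjoint B x))]
      exact Real.sqrt_le_sqrt hBx
    have htBJx : ‖adjoint B (J x)‖ ≤ t := by
      rw [htdef, ← Real.sqrt_sq (norm_nonneg (adjoint B (J x)))]
      exact Real.sqrt_le_sqrt hBJx
    set v := M z - lam • z with hv
    have hvfst : v.fst = (A x - lam • x) + B y := by
      rw [hv, WithLp.sub_fst, WithLp.smul_fst, blockOp_fst]
      abel
    have hvsnd : v.snd = (C y - lam • y) + adjoint B x := by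
      rw [hv, WithLp.sub_snd, WithLp.smul_snd, blockOp_snd]
      abel
    have hinner : (inner ℂ v w : ℂ).re =
        (inner ℂ (A x - lam • x) (J x) : ℂ).re + (inner ℂ (B y) (J x) : ℂ).re +
        ((inner ℂ (C y - lam • y) (K y) : ℂ).re + (inner ℂ (adjoint B x) (K y) : ℂ).re) := by
      rw [WithLp.prod_inner_apply]
      change (inner ℂ v.fst w.fst + inner ℂ v.snd w.snd).re = _
      rw [hwfst, hwsnd, hvfst, hvsnd, inner_add_left, inner_add_left,
        Complex.add_re, Complex.add_re, Complex.add_re]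
    have hb1 : (inner ℂ (A x - lam • x) (J x) : ℂ).re = (inner ℂ (GA x) x : ℂ).re := by
      rw [hJinner x]
    have hb2 : -(‖y‖ * t) ≤ (inner ℂ (B y) (J x) : ℂ).re := by
      have he : (inner ℂ (B y) (J x) : ℂ) = inner ℂ y (adjoint B (J x)) :=
        (ContinuousLinearMap.adjoint_inner_right B y (J x)).symm
      have h1 : |(inner ℂ (B y) (J x) : ℂ).re| ≤ ‖y‖ * t := by
        calc |(inner ℂ (B y) (J x) : ℂ).re| ≤ ‖(inner ℂ (B y) (J x) : ℂ)‖ :=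
              Complex.abs_re_le_norm _
          _ = ‖(inner ℂ y (adjoint B (J x)) : ℂ)‖ := by rw [he]
          _ ≤ ‖y‖ * ‖adjoint B (J x)‖ := norm_inner_le_norm _ _
          _ ≤ ‖y‖ * t := mul_le_mul_of_nonneg_left htBJx (norm_nonneg y)
      linarith only [h1, neg_abs_le ((inner ℂ (B y) (J x) : ℂ).re)]
    have hb3 : -(‖y‖ * t) ≤ (inner ℂ (adjoint B x) (K y) : ℂ).re := by
      have h1 : |(inner ℂ (adjoint B x) (K y) : ℂ).re| ≤ ‖y‖ * t := by
        calc |(inner ℂ (adjoint B x) (K y) : ℂ).re| ≤ ‖(inner ℂ (adjoint B x) (K y) : ℂ)‖ :=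
              Complex.abs_re_le_norm _
          _ ≤ ‖adjoint B x‖ * ‖K y‖ := norm_inner_le_norm _ _
          _ = ‖adjoint B x‖ * ‖y‖ := by rw [hKnorm y]
          _ ≤ t * ‖y‖ := mul_le_mul_of_nonneg_right htBx (norm_nonneg y)
          _ = ‖y‖ * t := by ring
      linarith only [h1, neg_abs_le ((inner ℂ (adjoint B x) (K y) : ℂ).re)]
    have hb4 : δ * ‖y‖ ^ 2 ≤ (inner ℂ (C y - lam • y) (K y) : ℂ).re := by
      rw [hKinner y]; exact hGCd y
    have hlow : (inner ℂ (GA x) x : ℂ).re + δ * ‖y‖ ^ 2 - 2 * (‖y‖ * t) ≤ (inner ℂ v w : ℂ).re := by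
      rw [hinner, hb1]
      linarith only [hb2, hb3, hb4]
    have key : c * (‖x‖ ^ 2 + ‖y‖ ^ 2) ≤
        (inner ℂ (GA x) x : ℂ).re + δ * ‖y‖ ^ 2 - 2 * (‖y‖ * t) :=
      arith_key a b lam dA δ ε c g (‖x‖ ^ 2) ‖y‖ t
        (a * (inner ℂ (GA x) x : ℂ).re + (a * lam + b) * ‖x‖ ^ 2)
        ((inner ℂ (GA x) x : ℂ).re)
        ha hN1 (norm_nonneg y) ht0 hθ0 hθa hgdef rfl ht2 hQd hdε hcδ hcε hc0 hε0
    have hwz : ‖w‖ = ‖z‖ := by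
      have h1 : ‖w‖ ^ 2 = ‖z‖ ^ 2 := by
        rw [WithLp.prod_norm_sq_eq_of_L2, WithLp.prod_norm_sq_eq_of_L2, hwfst, hwsnd,
          hJnorm x, hKnorm y]
      rw [← Real.sqrt_sq (norm_nonneg w), ← Real.sqrt_sq (norm_nonneg z), h1]
    have hzsq : ‖z‖ ^ 2 = ‖x‖ ^ 2 + ‖y‖ ^ 2 := WithLp.prod_norm_sq_eq_of_L2 z
    have hvT : ‖v‖ = ‖T z‖ := by
      have h1 : T z = lam • z - M z := by
        rw [hTdef, ContinuousLinearMap.sub_apply, ContinuousLinearMap.smul_apply,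
          ContinuousLinearMap.one_apply]
      rw [h1, hv, norm_sub_rev]
    have hchain : c * ‖z‖ ^ 2 ≤ ‖T z‖ * ‖z‖ := by
      calc c * ‖z‖ ^ 2 = c * (‖x‖ ^ 2 + ‖y‖ ^ 2) := by rw [hzsq]
        _ ≤ (inner ℂ v w : ℂ).re := le_trans key hlow
        _ ≤ |(inner ℂ v w : ℂ).re| := le_abs_self _
        _ ≤ ‖(inner ℂ v w : ℂ)‖ := Complex.abs_re_le_norm _
        _ ≤ ‖v‖ * ‖w‖ := norm_inner_le_norm _ _
        _ = ‖T z‖ * ‖z‖ := by rw [hvT, hwz]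
    rcases eq_or_lt_of_le (norm_nonneg z) with hz | hz
    · rw [← hz, mul_zero]
      exact norm_nonneg _
    · have h2 : c * ‖z‖ * ‖z‖ ≤ ‖T z‖ * ‖z‖ := by
        calc c * ‖z‖ * ‖z‖ = c * ‖z‖ ^ 2 := by ring
          _ ≤ ‖T z‖ * ‖z‖ := hchain
      exact (mul_le_mul_iff_left₀ hz).mp h2
  have hUnit : IsUnit T := isUnit_of_bddBelow T hTsa c hc0 hbd
  rw [spectrum.mem_iff] at hlamM
  apply hlamM
  rw [Algebra.algebraMap_eq_smul_one]
  rw [hTdef] at hUnit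
  exact hUnit
end

section
/- (Corollary 2.3, bounded-entry case.) Suppose H₂ ≠ {0}, let c = max σ(C), and suppose a, b ≥ 0 satisfy ‖B*x‖² ≤ a·Re⟨Ax, x⟩ + b·‖x‖² for all x ∈ H₁. Let μ₁, μ₂ ∈ σ(A) with a + c < μ₁ < μ₂, suppose the open interval (μ₁, μ₂) contains no point of σ(A), and suppose (μ₂ − c)² > 4(aμ₂ + b). Define α₁⁺ = (μ₁ + c + 2a)/2 + √(((μ₁ − c)/2)² + a(a + c) + b) and β₂± = (μ₂ + c)/2 ± √(((μ₂ − c)/2)² − (aμ₂ + b)). If β₂⁻ < (μ₁ + μ₂)/2 and α₁⁺ < β₂⁺, then μ₁ ≤ α₁⁺ < β₂⁺ ≤ μ₂ and no real λ with α₁⁺ < λ < β₂⁺ belongs to σ(M). -/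
set_option maxHeartbeats 4000000


open ContinuousLinearMap

variable {H₁ H₂ : Type*}
  [NormedAddCommGroup H₁] [InnerProductSpace ℂ H₁] [CompleteSpace H₁]
  [NormedAddCommGroup H₂] [InnerProductSpace ℂ H₂] [CompleteSpace H₂]



section helpers
variable {E F : Type*} [NormedAddCommGroup E] [InnerProductSpace ℂ E] [CompleteSpace E]
  [NormedAddCommGroup F] [InnerProductSpace ℂ F] [CompleteSpace F]

lemma my_re_inner_nonneg {T : E →L[ℂ] E} (h : 0 ≤ T) (x : E) :
    0 ≤ (inner ℂ (T x) x : ℂ).re := by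
  simpa using ((ContinuousLinearMap.nonneg_iff_isPositive T).mp h).re_inner_nonneg_left x

lemma my_symm {T : E →L[ℂ] E} (hT : IsSelfAdjoint T) (u v : E) :
    (inner ℂ (T u) v : ℂ) = inner ℂ u (T v) := by
  simpa using (isSelfAdjoint_iff_isSymmetric.mp hT) u v

lemma my_re_symm {T : E →L[ℂ] E} (hT : IsSelfAdjoint T) (u v : E) :
    (inner ℂ (T v) u : ℂ).re = (inner ℂ (T u) v : ℂ).re := by
  rw [my_symm hT v u]
  simpa using inner_re_symm (𝕜 := ℂ) v (T u)

lemma my_re_smul (r : ℝ) (u v : E) : (inner ℂ (r • u) v : ℂ).re = r * (inner ℂ u v : ℂ).re := by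
  rw [RCLike.real_smul_eq_coe_smul (K := ℂ), inner_smul_left, RCLike.conj_ofReal]
  simpa using RCLike.re_ofReal_mul r (inner ℂ u v)

lemma my_norm_sq (w : E) : (inner ℂ w w : ℂ).re = ‖w‖ ^ 2 := by
  simpa using inner_self_eq_norm_sq (𝕜 := ℂ) w

lemma my_isUnit_of_bddBelow {T : E →L[ℂ] E} (hT : IsSelfAdjoint T) {ε : ℝ} (hε : 0 < ε)
    (h : ∀ x, ε * ‖x‖ ≤ ‖T x‖) : IsUnit T := by
  rw [ContinuousLinearMap.isUnit_iff_bijective,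
    ContinuousLinearMap.bijective_iff_dense_range_and_antilipschitz]
  have hanti : AntilipschitzWith (ε.toNNReal)⁻¹ T := by
    apply ContinuousLinearMap.antilipschitz_of_bound
    intro x
    rw [NNReal.coe_inv, Real.coe_toNNReal _ hε.le, ← div_eq_inv_mul, le_div_iff₀ hε, mul_comm]
    exact h x
  refine ⟨?_, ⟨_, hanti⟩⟩
  rw [Submodule.topologicalClosure_eq_top_iff, Submodule.eq_bot_iff]
  intro x hx
  have hx' := (Submodule.mem_orthogonal _ x).mp hx
  have hTx : T x = 0 := by
    have h0 : (inner ℂ (T x) (T x) : ℂ) = 0 := by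
      rw [← my_symm hT (T x) x]
      exact hx' _ ⟨T x, rfl⟩
    exact inner_self_eq_zero.mp h0
  have h2 := h x
  rw [hTx, norm_zero] at h2
  have h3 : ‖x‖ ≤ 0 := nonpos_of_mul_nonpos_right (by nlinarith) hε
  exact norm_le_zero_iff.mp h3

lemma my_affine_spectrum_nonneg {T : E →L[ℂ] E} (hT : IsSelfAdjoint T) {a b : ℝ}
    (h : ∀ x : E, 0 ≤ a * (inner ℂ (T x) x : ℂ).re + b * ‖x‖ ^ 2)
    {t : ℝ} (ht : t ∈ spectrum ℝ T) : 0 ≤ a * t + b := by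
  have h1 : IsSelfAdjoint (a • T + b • (1 : E →L[ℂ] E)) :=
    IsSelfAdjoint.add (IsSelfAdjoint.smul (star_trivial a) hT)
      (IsSelfAdjoint.smul (star_trivial b) (IsSelfAdjoint.one _))
  have hTab : (0 : E →L[ℂ] E) ≤ a • T + b • 1 := by
    rw [ContinuousLinearMap.nonneg_iff_isPositive]
    refine ⟨isSelfAdjoint_iff_isSymmetric.mp h1, fun x => ?_⟩
    have hx := h x
    have hre : ContinuousLinearMap.reApplyInnerSelf (a • T + b • 1) x
        = a * (inner ℂ (T x) x : ℂ).re + b * ‖x‖ ^ 2 := by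
      simp only [ContinuousLinearMap.reApplyInnerSelf, ContinuousLinearMap.add_apply,
        ContinuousLinearMap.smul_apply, ContinuousLinearMap.one_apply, inner_add_left]
      rw [RCLike.real_smul_eq_coe_smul (K := ℂ), RCLike.real_smul_eq_coe_smul (K := ℂ) b,
        inner_smul_left, inner_smul_left, RCLike.conj_ofReal, RCLike.conj_ofReal,
        map_add, RCLike.re_ofReal_mul, RCLike.re_ofReal_mul, inner_self_eq_norm_sq]
      simp [RCLike.re_to_complex]
    rw [hre]; exact hx
  have hmem : a * t + b ∈ spectrum ℝ (a • T + b • (1 : E →L[ℂ] E)) := by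
    have hcfc : cfc (fun s : ℝ => a * s + b) T = a • T + b • 1 := by
      have he : (fun s : ℝ => a * s + b) = fun s => (fun s => a * s) s + (fun _ => b) s := rfl
      rw [he, cfc_add T _ _ (by fun_prop) (by fun_prop), cfc_const_mul_id a T hT,
        cfc_const b T hT, Algebra.algebraMap_eq_smul_one]
    rw [← hcfc, cfc_map_spectrum (fun s : ℝ => a * s + b) T hT (by fun_prop)]
    exact ⟨t, ht, rfl⟩
  exact spectrum_nonneg_of_nonneg hTab hmem

end helpers

section blk
variable {H₁ H₂ : Type*}
  [NormedAddCommGroup H₁] [InnerProductSpace ℂ H₁] [CompleteSpace H₁]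
  [NormedAddCommGroup H₂] [InnerProductSpace ℂ H₂] [CompleteSpace H₂]

noncomputable def blk (P : H₁ →L[ℂ] H₁) (Q : H₂ →L[ℂ] H₁) (Q' : H₁ →L[ℂ] H₂)
    (S : H₂ →L[ℂ] H₂) : WithLp 2 (H₁ × H₂) →L[ℂ] WithLp 2 (H₁ × H₂) :=
  (((WithLp.prodContinuousLinearEquiv 2 ℂ H₁ H₂).symm :
      (H₁ × H₂) →L[ℂ] WithLp 2 (H₁ × H₂)) ∘L
    ((P ∘L ContinuousLinearMap.fst ℂ H₁ H₂ + Q ∘L ContinuousLinearMap.snd ℂ H₁ H₂).prod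
      (Q' ∘L ContinuousLinearMap.fst ℂ H₁ H₂
        + S ∘L ContinuousLinearMap.snd ℂ H₁ H₂))) ∘L
    ((WithLp.prodContinuousLinearEquiv 2 ℂ H₁ H₂) :
      WithLp 2 (H₁ × H₂) →L[ℂ] (H₁ × H₂))

lemma blk_fst (P : H₁ →L[ℂ] H₁) (Q : H₂ →L[ℂ] H₁) (Q' : H₁ →L[ℂ] H₂) (S : H₂ →L[ℂ] H₂)
    (z : WithLp 2 (H₁ × H₂)) : (blk P Q Q' S z).fst = P z.fst + Q z.snd := rfl

lemma blk_snd (P : H₁ →L[ℂ] H₁) (Q : H₂ →L[ℂ] H₁) (Q' : H₁ →L[ℂ] H₂) (S : H₂ →L[ℂ] H₂)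
    (z : WithLp 2 (H₁ × H₂)) : (blk P Q Q' S z).snd = Q' z.fst + S z.snd := rfl

lemma my_withlp_ext {z w : WithLp 2 (H₁ × H₂)} (h1 : z.fst = w.fst) (h2 : z.snd = w.snd) :
    z = w := by
  apply (WithLp.equiv 2 (H₁ × H₂)).injective
  exact Prod.ext_iff.mpr ⟨by simpa using h1, by simpa using h2⟩

example (z : WithLp 2 (H₁ × H₂)) (lam : ℝ) :
    ((algebraMap ℝ (WithLp 2 (H₁ × H₂) →L[ℂ] WithLp 2 (H₁ × H₂)) lam) z).fst = lam • z.fst := by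
  rw [Algebra.algebraMap_eq_smul_one]
  simp
end blk

section ops
variable {E : Type*} [NormedAddCommGroup E] [InnerProductSpace ℂ E] [CompleteSpace E]

lemma my_resolvent (C : E →L[ℂ] E) (hC : IsSelfAdjoint C) {lam c : ℝ}
    (hspec : ∀ t ∈ spectrum ℝ C, t ≤ c) (hlc : c < lam) :
    ∃ R : E →L[ℂ] E, IsSelfAdjoint R ∧
      (algebraMap ℝ (E →L[ℂ] E) lam - C) * R = 1 ∧
      R * (algebraMap ℝ (E →L[ℂ] E) lam - C) = 1 ∧
      (∀ w : E, 0 ≤ (inner ℂ (R w) w : ℂ).re) ∧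
      (∀ w : E, (lam - c) * (inner ℂ (R w) w : ℂ).re ≤ ‖w‖ ^ 2) := by
  have hne : ∀ t ∈ spectrum ℝ C, lam - t ≠ 0 := fun t ht => by
    have := hspec t ht; intro h; linarith [sub_eq_zero.mp h]
  have hcont : ContinuousOn (fun t : ℝ => (lam - t)⁻¹) (spectrum ℝ C) :=
    ContinuousOn.inv₀ (by fun_prop) hne
  have hT : algebraMap ℝ (E →L[ℂ] E) lam - C = cfc (fun t : ℝ => lam - t) C := by
    rw [cfc_sub (fun _ => lam) (fun t : ℝ => t) C (by fun_prop) (by fun_prop),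
      cfc_const lam C hC, cfc_id' ℝ C hC]
  set R := cfc (fun t : ℝ => (lam - t)⁻¹) C with hR
  have hmul1 : (algebraMap ℝ (E →L[ℂ] E) lam - C) * R = 1 := by
    rw [hT, hR, ← cfc_mul _ _ C (by fun_prop) hcont, ← cfc_one (R := ℝ) C hC]
    exact cfc_congr fun t ht => mul_inv_cancel₀ (hne t ht)
  have hmul2 : R * (algebraMap ℝ (E →L[ℂ] E) lam - C) = 1 := by
    rw [hT, hR, ← cfc_mul _ _ C hcont (by fun_prop), ← cfc_one (R := ℝ) C hC]
    exact cfc_congr fun t ht => inv_mul_cancel₀ (hne t ht)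
  have hR0 : (0 : E →L[ℂ] E) ≤ R :=
    cfc_nonneg fun t ht => inv_nonneg.mpr (by linarith [hspec t ht])
  have hRsa : IsSelfAdjoint R := cfc_predicate _ C
  have hle : (lam - c) • R ≤ 1 := by
    rw [hR, ← cfc_const_mul (lam - c) _ C hcont, ← cfc_one (R := ℝ) C hC]
    refine cfc_mono (fun t ht => ?_) (continuousOn_const.mul hcont) continuousOn_const
    have h1 : t ≤ c := hspec t ht
    have h2 : (0:ℝ) < lam - t := by linarith
    calc (lam - c) * (lam - t)⁻¹ ≤ (lam - t) * (lam - t)⁻¹ :=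
          mul_le_mul_of_nonneg_right (by linarith) (inv_nonneg.mpr h2.le)
      _ = 1 := mul_inv_cancel₀ h2.ne'
  refine ⟨R, hRsa, hmul1, hmul2, fun w => my_re_inner_nonneg hR0 w, fun w => ?_⟩
  have h3 := my_re_inner_nonneg (sub_nonneg.mpr hle) w
  have h4 : ((1 - (lam - c) • R) w) = w - (lam - c) • R w := by
    simp [ContinuousLinearMap.sub_apply]
  rw [h4, inner_sub_left] at h3
  rw [Complex.sub_re, my_re_smul, my_norm_sq] at h3
  linarith
end ops

section proj
variable {E : Type*} [NormedAddCommGroup E] [InnerProductSpace ℂ E] [CompleteSpace E]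

lemma my_proj (A : E →L[ℂ] E) (hA : IsSelfAdjoint A) {μ₁ μ₂ : ℝ} (h12 : μ₁ < μ₂)
    (hgap : ∀ t ∈ spectrum ℝ A, t ≤ μ₁ ∨ μ₂ ≤ t) :
    ∃ P : E →L[ℂ] E, IsSelfAdjoint P ∧ P * P = P ∧
      (∀ x : E, (inner ℂ (A (P x)) (P x) : ℂ).re ≤ μ₁ * ‖P x‖ ^ 2) ∧
      (∀ x : E, μ₂ * ‖x - P x‖ ^ 2 ≤ (inner ℂ (A (x - P x)) (x - P x) : ℂ).re) := by
  have hpos : (0:ℝ) < μ₂ - μ₁ := by linarith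
  set f : ℝ → ℝ := fun t => min 1 (max 0 ((μ₂ - t) * (μ₂ - μ₁)⁻¹)) with hfdef
  have hfc : Continuous f := by
    apply Continuous.min continuous_const
    exact Continuous.max continuous_const (by fun_prop)
  have hf1 : ∀ t : ℝ, t ≤ μ₁ → f t = 1 := by
    intro t ht
    have h0 : (1:ℝ) ≤ (μ₂ - t) * (μ₂ - μ₁)⁻¹ := by
      rw [← div_eq_mul_inv, le_div_iff₀ hpos]; linarith
    rw [hfdef]; dsimp only
    rw [max_eq_right (by linarith : (0:ℝ) ≤ (μ₂ - t) * (μ₂ - μ₁)⁻¹), min_eq_left h0]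
  have hf0 : ∀ t : ℝ, μ₂ ≤ t → f t = 0 := by
    intro t ht
    have hq : (μ₂ - t) * (μ₂ - μ₁)⁻¹ ≤ 0 := by
      have := mul_le_mul_of_nonneg_right (show μ₂ - t ≤ 0 by linarith) (inv_nonneg.mpr hpos.le)
      simpa using this
    rw [hfdef]; dsimp only
    rw [max_eq_left hq, min_eq_right zero_le_one]
  have hsplit : ∀ t ∈ spectrum ℝ A, f t = 1 ∧ t ≤ μ₁ ∨ f t = 0 ∧ μ₂ ≤ t := fun t ht =>
    (hgap t ht).imp (fun h => ⟨hf1 t h, h⟩) (fun h => ⟨hf0 t h, h⟩)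
  set P := cfc f A with hP
  have hPsa : IsSelfAdjoint P := cfc_predicate f A
  have hP2 : P * P = P := by
    rw [hP, ← cfc_mul f f A hfc.continuousOn hfc.continuousOn]
    exact cfc_congr fun t ht => by rcases hsplit t ht with ⟨h,_⟩|⟨h,_⟩ <;> rw [h] <;> ring
  refine ⟨P, hPsa, hP2, fun x => ?_, fun x => ?_⟩
  · have hM : algebraMap ℝ (E →L[ℂ] E) μ₁ - A = cfc (fun t : ℝ => μ₁ - t) A := by
      rw [cfc_sub (fun _ => μ₁) (fun t : ℝ => t) A (by fun_prop) (by fun_prop),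
        cfc_const μ₁ A hA, cfc_id' ℝ A hA]
    have hX : cfc (fun t : ℝ => f t * ((μ₁ - t) * f t)) A
        = P * ((algebraMap ℝ (E →L[ℂ] E) μ₁ - A) * P) := by
      rw [hM, hP, ← cfc_mul _ f A (by fun_prop) hfc.continuousOn,
        ← cfc_mul f _ A hfc.continuousOn (by fun_prop)]
    have hX0 : (0:E →L[ℂ] E) ≤ cfc (fun t : ℝ => f t * ((μ₁ - t) * f t)) A :=
      cfc_nonneg fun t ht => by
        rcases hsplit t ht with ⟨h,h'⟩|⟨h,h'⟩ <;> rw [h] <;> nlinarith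
    have h5 := my_re_inner_nonneg (hX ▸ hX0) x
    rw [ContinuousLinearMap.mul_apply, ContinuousLinearMap.mul_apply,
      my_symm hPsa ((algebraMap ℝ (E →L[ℂ] E) μ₁ - A) (P x)) x] at h5
    have h6 : (algebraMap ℝ (E →L[ℂ] E) μ₁ - A) (P x) = μ₁ • P x - A (P x) := by
      rw [ContinuousLinearMap.sub_apply, Algebra.algebraMap_eq_smul_one]
      simp
    rw [h6, inner_sub_left, Complex.sub_re, my_re_smul, my_norm_sq] at h5
    linarith
  · have hM : A - algebraMap ℝ (E →L[ℂ] E) μ₂ = cfc (fun t : ℝ => t - μ₂) A := by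
      rw [cfc_sub (fun t : ℝ => t) (fun _ => μ₂) A (by fun_prop) (by fun_prop),
        cfc_const μ₂ A hA, cfc_id' ℝ A hA]
    have hgc : ContinuousOn (fun t : ℝ => 1 - f t) (spectrum ℝ A) :=
      continuousOn_const.sub hfc.continuousOn
    have hQ : (1 : E →L[ℂ] E) - P = cfc (fun t : ℝ => 1 - f t) A := by
      rw [cfc_sub (fun _ => (1:ℝ)) f A (by fun_prop) hfc.continuousOn,
        cfc_const 1 A hA, map_one, hP]
    have h1Psa : IsSelfAdjoint ((1 : E →L[ℂ] E) - P) := (IsSelfAdjoint.one _).sub hPsa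
    have hX : cfc (fun t : ℝ => (1 - f t) * ((t - μ₂) * (1 - f t))) A
        = (1 - P) * ((A - algebraMap ℝ (E →L[ℂ] E) μ₂) * (1 - P)) := by
      rw [hM, hQ, ← cfc_mul (fun t : ℝ => t - μ₂) (fun t : ℝ => 1 - f t) A (by fun_prop) hgc,
        ← cfc_mul (fun t : ℝ => 1 - f t) (fun t : ℝ => (t - μ₂) * (1 - f t)) A hgc
          (((continuous_id.sub continuous_const).continuousOn).mul hgc)]
    have hX0 : (0:E →L[ℂ] E) ≤ cfc (fun t : ℝ => (1 - f t) * ((t - μ₂) * (1 - f t))) A :=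
      cfc_nonneg fun t ht => by
        rcases hsplit t ht with ⟨h,h'⟩|⟨h,h'⟩ <;> rw [h] <;> nlinarith
    have h5 := my_re_inner_nonneg (hX ▸ hX0) x
    rw [ContinuousLinearMap.mul_apply, ContinuousLinearMap.mul_apply,
      my_symm h1Psa ((A - algebraMap ℝ (E →L[ℂ] E) μ₂) ((1 - P) x)) x] at h5
    have h7 : ((1 : E →L[ℂ] E) - P) x = x - P x := by
      simp [ContinuousLinearMap.sub_apply]
    have h6 : (A - algebraMap ℝ (E →L[ℂ] E) μ₂) ((1 - P) x) = A (x - P x) - μ₂ • (x - P x) := by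
      rw [ContinuousLinearMap.sub_apply, Algebra.algebraMap_eq_smul_one, h7]
      simp
    rw [h6, h7, inner_sub_left, Complex.sub_re, my_re_smul, my_norm_sq] at h5
    linarith
end proj

/-- Corollary 2.3 (bounded-entry case): a spectral-free interval `(α₁⁺, β₂⁺)` for `M`
between consecutive spectral points `μ₁ < μ₂` of `A`. -/
theorem spectral_free_interval_cor23 [Nontrivial H₂]
    (A : H₁ →L[ℂ] H₁) (hA : IsSelfAdjoint A)
    (C : H₂ →L[ℂ] H₂) (hC : IsSelfAdjoint C) (B : H₂ →L[ℂ] H₁)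
    (a b : ℝ) (ha : 0 ≤ a) (hb : 0 ≤ b)
    (hab : ∀ x : H₁, ‖ContinuousLinearMap.adjoint B x‖ ^ 2 ≤
      a * (inner ℂ (A x) x : ℂ).re + b * ‖x‖ ^ 2)
    (c : ℝ) (hc : c = sSup (spectrum ℝ C))
    (μ₁ μ₂ : ℝ) (hμ₁ : μ₁ ∈ spectrum ℝ A) (hμ₂ : μ₂ ∈ spectrum ℝ A)
    (hca : a + c < μ₁) (hμ₁₂ : μ₁ < μ₂)
    (hgap : Set.Ioo μ₁ μ₂ ∩ spectrum ℝ A = ∅)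
    (hdisc : (μ₂ - c) ^ 2 > 4 * (a * μ₂ + b))
    (α₁p β₂m β₂p : ℝ)
    (hα₁p : α₁p = (μ₁ + c + 2 * a) / 2 + Real.sqrt (((μ₁ - c) / 2) ^ 2 + a * (a + c) + b))
    (hβ₂m : β₂m = (μ₂ + c) / 2 - Real.sqrt (((μ₂ - c) / 2) ^ 2 - (a * μ₂ + b)))
    (hβ₂p : β₂p = (μ₂ + c) / 2 + Real.sqrt (((μ₂ - c) / 2) ^ 2 - (a * μ₂ + b)))
    (h1 : β₂m < (μ₁ + μ₂) / 2) (h2 : α₁p < β₂p) :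
    μ₁ ≤ α₁p ∧ α₁p < β₂p ∧ β₂p ≤ μ₂ ∧
      ∀ lam : ℝ, α₁p < lam → lam < β₂p → lam ∉ spectrum ℝ (blockOp A B C) := by
  have hbddC : BddAbove (spectrum ℝ C) := (spectrum.isBounded C).bddAbove
  have hspecC : ∀ t ∈ spectrum ℝ C, t ≤ c := fun t ht => hc ▸ le_csSup hbddC ht
  have habA : ∀ t ∈ spectrum ℝ A, 0 ≤ a * t + b := fun t ht =>
    my_affine_spectrum_nonneg hA (fun x => le_trans (by positivity) (hab x)) ht
  have hab1 : 0 ≤ a * μ₁ + b := habA μ₁ hμ₁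
  have hab2 : 0 ≤ a * μ₂ + b := habA μ₂ hμ₂
  have hcμ₁ : c < μ₁ := by linarith
  obtain ⟨K, hK⟩ : ∃ K : ℝ, K = ((μ₁ - c) / 2) ^ 2 + a * (a + c) + b := ⟨_, rfl⟩
  have hα₁p' : α₁p = (μ₁ + c + 2 * a) / 2 + Real.sqrt K := by rw [hα₁p, hK]
  have hK0 : 0 ≤ K := by rw [hK]; nlinarith only [sq_nonneg (μ₁ - c - 2*a), hab1]
  have hsK : Real.sqrt K ^ 2 = K := Real.sq_sqrt hK0
  have hsK0 : 0 ≤ Real.sqrt K := Real.sqrt_nonneg K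
  have hD2 : ((μ₁ - (c + 2*a))/2)^2 ≤ K := by rw [hK]; nlinarith only [hab1]
  have part1 : μ₁ ≤ α₁p := by
    have h9 : (μ₁ - (c + 2*a))/2 ≤ Real.sqrt K := by
      rcases le_or_gt ((μ₁ - (c + 2*a))/2) 0 with h|h
      · linarith only [h, hsK0]
      · have h10 := Real.sqrt_le_sqrt hD2
        rwa [Real.sqrt_sq h.le] at h10
    rw [hα₁p']; linarith only [h9]
  obtain ⟨L, hL⟩ : ∃ L : ℝ, L = ((μ₂ - c) / 2) ^ 2 - (a * μ₂ + b) := ⟨_, rfl⟩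
  have hβ₂p' : β₂p = (μ₂ + c) / 2 + Real.sqrt L := by rw [hβ₂p, hL]
  have hL0 : 0 ≤ L := by rw [hL]; nlinarith only [hdisc]
  have part3 : β₂p ≤ μ₂ := by
    have h9 : Real.sqrt L ≤ (μ₂ - c)/2 := by
      rw [show ((μ₂ - c)/2) = Real.sqrt (((μ₂ - c)/2)^2) from
        (Real.sqrt_sq (by linarith only [hcμ₁, hμ₁₂])).symm]
      apply Real.sqrt_le_sqrt
      rw [hL]; linarith only [hab2]
    rw [hβ₂p']; linarith only [h9]
  refine ⟨part1, h2, part3, ?_⟩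
  intro lam hlow hhigh
  have hlam1 : μ₁ < lam := lt_of_le_of_lt part1 hlow
  have hlam2 : lam < μ₂ := lt_of_lt_of_le hhigh part3
  have hlc : c < lam := by linarith only [hca, ha, hlam1]
  have hlc' : (0:ℝ) < lam - c := by linarith only [hlc]
  have hq : 0 < (lam - μ₁) * (lam - c) - (a * μ₁ + b) := by
    have hlow' : (μ₁ + c + 2 * a) / 2 + Real.sqrt K < lam := hα₁p' ▸ hlow
    have hls : 0 < lam - (μ₁ + c + 2*a)/2 - Real.sqrt K := by linarith only [hlow']
    have hls2 : 0 < lam - (μ₁ + c + 2*a)/2 + Real.sqrt K := by linarith only [hlow', hsK0]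
    have hprod := mul_pos hls hls2
    have h2a : 0 ≤ a * (lam - μ₁) := mul_nonneg ha (by linarith only [hlam1])
    have hXK : K < (lam - (μ₁ + c + 2*a)/2)^2 := by nlinarith only [hprod, hsK]
    rw [hK] at hXK
    nlinarith only [hXK, h2a]
  rw [spectrum.notMem_iff]
  -- operator part
  obtain ⟨R, hRsa, hTR, hRT, hR0, hRform⟩ := my_resolvent C hC hspecC hlc
  have hgap' : ∀ t ∈ spectrum ℝ A, t ≤ μ₁ ∨ μ₂ ≤ t := by
    intro t ht
    by_contra hcon
    push_neg at hcon
    have hmem : t ∈ Set.Ioo μ₁ μ₂ ∩ spectrum ℝ A := ⟨⟨hcon.1, hcon.2⟩, ht⟩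
    rw [hgap] at hmem
    exact absurd hmem (Set.notMem_empty t)
  obtain ⟨P, hPsa, hP2, hPbound, hFbound⟩ := my_proj A hA hμ₁₂ hgap'
  set adjB := ContinuousLinearMap.adjoint B with hadjB
  set T : H₂ →L[ℂ] H₂ := algebraMap ℝ (H₂ →L[ℂ] H₂) lam - C with hT
  set S₀ : H₁ →L[ℂ] H₁ :=
    (algebraMap ℝ (H₁ →L[ℂ] H₁) lam - A) - B ∘L (R ∘L adjB) with hS₀
  have halg₁ : ∀ w : H₁, (algebraMap ℝ (H₁ →L[ℂ] H₁) lam) w = lam • w := fun w => by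
    rw [Algebra.algebraMap_eq_smul_one]; simp
  have halg₂ : ∀ w : H₂, (algebraMap ℝ (H₂ →L[ℂ] H₂) lam) w = lam • w := fun w => by
    rw [Algebra.algebraMap_eq_smul_one]; simp
  have hS₀app : ∀ w : H₁, S₀ w = lam • w - A w - B (R (adjB w)) := fun w => by
    rw [hS₀]
    simp only [ContinuousLinearMap.sub_apply, ContinuousLinearMap.comp_apply]
    rw [halg₁]
  have hTapp : ∀ w : H₂, T w = lam • w - C w := fun w => by
    rw [hT, ContinuousLinearMap.sub_apply, halg₂]
  have halgsa : IsSelfAdjoint (algebraMap ℝ (H₁ →L[ℂ] H₁) lam) := by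
    rw [Algebra.algebraMap_eq_smul_one]
    exact IsSelfAdjoint.smul (star_trivial lam) (IsSelfAdjoint.one _)
  have hDsa : IsSelfAdjoint (B ∘L (R ∘L adjB)) := by
    rw [isSelfAdjoint_iff']
    rw [hadjB, ContinuousLinearMap.adjoint_comp, ContinuousLinearMap.adjoint_comp,
      ContinuousLinearMap.adjoint_adjoint, isSelfAdjoint_iff'.mp hRsa,
      ContinuousLinearMap.comp_assoc]
  have hS₀sa : IsSelfAdjoint S₀ := (halgsa.sub hA).sub hDsa
  have hS₀u : ∀ u : H₁, (inner ℂ (S₀ u) u : ℂ).re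
      = lam * ‖u‖^2 - (inner ℂ (A u) u : ℂ).re - (inner ℂ (R (adjB u)) (adjB u) : ℂ).re := by
    intro u
    rw [hS₀app u, inner_sub_left, inner_sub_left, Complex.sub_re, Complex.sub_re,
      my_re_smul, my_norm_sq]
    have hBR := ContinuousLinearMap.adjoint_inner_right B (R (adjB u)) u
    rw [← hadjB] at hBR
    rw [← hBR]
  obtain ⟨ε₁, hε₁⟩ : ∃ e : ℝ, e = ((lam - μ₁) * (lam - c) - (a * μ₁ + b)) / (lam - c) := ⟨_, rfl⟩
  have hε₁0 : 0 < ε₁ := hε₁ ▸ div_pos hq hlc'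
  obtain ⟨ε₂, hε₂⟩ : ∃ e : ℝ, e = μ₂ - lam := ⟨_, rfl⟩
  have hε₂0 : 0 < ε₂ := by rw [hε₂]; linarith only [hlam2]
  obtain ⟨ε, hε⟩ : ∃ e : ℝ, e = min ε₁ ε₂ := ⟨_, rfl⟩
  have hε0 : 0 < ε := hε ▸ lt_min hε₁0 hε₂0
  have estP : ∀ x : H₁, ε₁ * ‖P x‖^2 ≤ (inner ℂ (S₀ (P x)) (P x) : ℂ).re := by
    intro x
    have h1 := hPbound x
    have h2 := hRform (adjB (P x))
    have h3 := hab (P x)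
    have h4 := hR0 (adjB (P x))
    rw [hS₀u (P x)]
    have hε₁e : ε₁ * (lam - c) = (lam - μ₁) * (lam - c) - (a * μ₁ + b) := by
      rw [hε₁]; exact div_mul_cancel₀ _ hlc'.ne'
    have key : (lam - c) * (ε₁ * ‖P x‖^2)
        ≤ (lam - c) * (lam * ‖P x‖^2 - (inner ℂ (A (P x)) (P x) : ℂ).re
            - (inner ℂ (R (adjB (P x))) (adjB (P x)) : ℂ).re) := by
      have he : (lam - c) * (ε₁ * ‖P x‖^2)
          = ((lam - μ₁) * (lam - c) - (a * μ₁ + b)) * ‖P x‖^2 := by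
        rw [← hε₁e]; ring
      rw [he]
      nlinarith only [mul_nonneg hlc'.le (sub_nonneg.mpr h1), mul_nonneg ha (sub_nonneg.mpr h1),
        h2, h3]
    exact le_of_mul_le_mul_left key hlc'
  have estF : ∀ x : H₁, (inner ℂ (S₀ (x - P x)) (x - P x) : ℂ).re ≤ -(ε₂ * ‖x - P x‖^2) := by
    intro x
    have h1 := hFbound x
    have h4 := hR0 (adjB (x - P x))
    rw [hS₀u (x - P x), hε₂]
    linarith only [h1, h4]
  have hbdd : ∀ x : H₁, ε * ‖x‖ ≤ ‖S₀ x‖ := by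
    intro x
    have hx2 : P x + (x - P x) = x := by abel
    have hPPx : P (P x) = P x := by rw [← ContinuousLinearMap.mul_apply, hP2]
    have hiuv : (inner ℂ (P x) (x - P x) : ℂ) = 0 := by
      rw [my_symm hPsa x (x - P x), map_sub, hPPx, sub_self, inner_zero_right]
    have hnorm : ‖P x‖^2 + ‖x - P x‖^2 = ‖x‖^2 := by
      have h := norm_add_sq (𝕜 := ℂ) (P x) (x - P x)
      rw [hx2, hiuv] at h
      simp at h
      linarith only [h]
    have hJ2 : ‖P x - (x - P x)‖^2 = ‖x‖^2 := by
      have h := norm_sub_sq (𝕜 := ℂ) (P x) (x - P x)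
      rw [hiuv] at h
      simp at h
      linarith only [h, hnorm]
    have hJn : ‖P x - (x - P x)‖ = ‖x‖ := by
      rw [← Real.sqrt_sq (norm_nonneg (P x - (x - P x))), hJ2, Real.sqrt_sq (norm_nonneg x)]
    have hcross : (inner ℂ (S₀ (x - P x)) (P x) : ℂ).re
        = (inner ℂ (S₀ (P x)) (x - P x) : ℂ).re := my_re_symm hS₀sa (P x) (x - P x)
    have hSx : S₀ x = S₀ (P x) + S₀ (x - P x) := by rw [← map_add, hx2]
    have hkey : ε * ‖x‖^2 ≤ (inner ℂ (S₀ x) (P x - (x - P x)) : ℂ).re := by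
      rw [hSx]
      simp only [inner_add_left, inner_sub_right, Complex.add_re, Complex.sub_re]
      have e1 := estP x
      have e2 := estF x
      have hcross' := hcross
      simp only [inner_sub_right, Complex.sub_re] at e2 hcross'
      have m1 : ε * ‖P x‖^2 ≤ ε₁ * ‖P x‖^2 :=
        mul_le_mul_of_nonneg_right (hε ▸ min_le_left ε₁ ε₂) (sq_nonneg _)
      have m2 : ε * ‖x - P x‖^2 ≤ ε₂ * ‖x - P x‖^2 :=
        mul_le_mul_of_nonneg_right (hε ▸ min_le_right ε₁ ε₂) (sq_nonneg _)
      have hnx : ε * ‖x‖^2 = ε * ‖P x‖^2 + ε * ‖x - P x‖^2 := by rw [← hnorm]; ring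
      linarith only [e1, e2, hcross', m1, m2, hnx]
    have hCS : (inner ℂ (S₀ x) (P x - (x - P x)) : ℂ).re ≤ ‖S₀ x‖ * ‖x‖ := by
      calc (inner ℂ (S₀ x) (P x - (x - P x)) : ℂ).re
          ≤ ‖(inner ℂ (S₀ x) (P x - (x - P x)) : ℂ)‖ := Complex.re_le_norm _
        _ ≤ ‖S₀ x‖ * ‖P x - (x - P x)‖ := norm_inner_le_norm _ _
        _ = ‖S₀ x‖ * ‖x‖ := by rw [hJn]
    by_cases hx0 : x = 0
    · simp [hx0]
    · have hx0' : 0 < ‖x‖ := norm_pos_iff.mpr hx0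
      have h9 : ε * ‖x‖ * ‖x‖ ≤ ‖S₀ x‖ * ‖x‖ := by
        have h10 := hkey.trans hCS
        calc ε * ‖x‖ * ‖x‖ = ε * ‖x‖^2 := by ring
          _ ≤ ‖S₀ x‖ * ‖x‖ := h10
      exact le_of_mul_le_mul_right h9 hx0'
  have hS₀unit : IsUnit S₀ := my_isUnit_of_bddBelow hS₀sa hε0 hbdd
  obtain ⟨Su, hSu⟩ := hS₀unit
  set S' : H₁ →L[ℂ] H₁ := ↑Su⁻¹ with hS'
  have hSS' : S₀ * S' = 1 := by rw [← hSu, hS']; exact_mod_cast Su.mul_inv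
  have hS'S : S' * S₀ = 1 := by rw [← hSu, hS']; exact_mod_cast Su.inv_mul
  have hSS'v : ∀ w, S₀ (S' w) = w := fun w => by
    rw [← ContinuousLinearMap.mul_apply, hSS', ContinuousLinearMap.one_apply]
  have hS'Sv : ∀ w, S' (S₀ w) = w := fun w => by
    rw [← ContinuousLinearMap.mul_apply, hS'S, ContinuousLinearMap.one_apply]
  have hTRv : ∀ w, T (R w) = w := fun w => by
    rw [← ContinuousLinearMap.mul_apply, hT, hTR, ContinuousLinearMap.one_apply]
  have hRTv : ∀ w, R (T w) = w := fun w => by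
    rw [← ContinuousLinearMap.mul_apply, hT, hRT, ContinuousLinearMap.one_apply]
  set W := blk S' (S' ∘L (B ∘L R)) ((R ∘L adjB) ∘L S')
    (R + ((R ∘L adjB) ∘L (S' ∘L (B ∘L R)))) with hW
  set G := algebraMap ℝ (WithLp 2 (H₁ × H₂) →L[ℂ] WithLp 2 (H₁ × H₂)) lam
    - blockOp A B C with hG
  have hM : blockOp A B C = blk A B adjB C := rfl
  have halgW : ∀ w : WithLp 2 (H₁ × H₂),
      (algebraMap ℝ (WithLp 2 (H₁ × H₂) →L[ℂ] WithLp 2 (H₁ × H₂)) lam) w = lam • w := fun w => by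
    rw [Algebra.algebraMap_eq_smul_one]; simp
  have hGfst : ∀ w, (G w).fst = lam • w.fst - (A w.fst + B w.snd) := fun w => by
    rw [hG, ContinuousLinearMap.sub_apply, halgW, hM]
    rfl
  have hGsnd : ∀ w, (G w).snd = lam • w.snd - (adjB w.fst + C w.snd) := fun w => by
    rw [hG, ContinuousLinearMap.sub_apply, halgW, hM]
    rfl
  have hWfst : ∀ w, (W w).fst = S' w.fst + S' (B (R w.snd)) := fun w => by
    rw [hW, blk_fst]; rfl
  have hWsnd : ∀ w, (W w).snd
      = R (adjB (S' w.fst)) + (R w.snd + R (adjB (S' (B (R w.snd))))) := fun w => by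
    rw [hW, blk_snd]; rfl
  have E1' : ∀ u : H₁, lam • S' u = u + (A (S' u) + B (R (adjB (S' u)))) := by
    intro u
    have h := hSS'v u
    rw [hS₀app, sub_sub, sub_eq_iff_eq_add] at h
    exact h
  have F1' : ∀ w : H₂, lam • R w = w + C (R w) := by
    intro w
    have h := hTRv w
    rw [hTapp, sub_eq_iff_eq_add] at h
    exact h
  have hGW : G * W = 1 := by
    refine ContinuousLinearMap.ext fun z => ?_
    rw [ContinuousLinearMap.mul_apply, ContinuousLinearMap.one_apply]
    refine my_withlp_ext ?_ ?_
    · rw [hGfst (W z), hWfst z, hWsnd z]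
      simp only [smul_add, map_add]
      rw [E1' z.fst, E1' (B (R z.snd))]
      abel
    · rw [hGsnd (W z), hWfst z, hWsnd z]
      simp only [smul_add, map_add]
      rw [F1' (adjB (S' z.fst)), F1' z.snd, F1' (adjB (S' (B (R z.snd))))]
      abel
  have hg2 : ∀ z : WithLp 2 (H₁ × H₂), R ((G z).snd) = z.snd - R (adjB z.fst) := by
    intro z
    have hTy : (G z).snd = T z.snd - adjB z.fst := by rw [hGsnd z, hTapp]; abel
    rw [hTy, map_sub, hRTv]
  have hsum : ∀ z : WithLp 2 (H₁ × H₂),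
      (G z).fst + B (R ((G z).snd)) = S₀ z.fst := by
    intro z
    rw [hGfst z, hg2 z, hS₀app z.fst, map_sub]
    abel
  have hWG : W * G = 1 := by
    refine ContinuousLinearMap.ext fun z => ?_
    rw [ContinuousLinearMap.mul_apply, ContinuousLinearMap.one_apply]
    have hc3 : S' ((G z).fst) + S' (B (R ((G z).snd))) = z.fst := by
      rw [← map_add, hsum z, hS'Sv]
    refine my_withlp_ext ?_ ?_
    · rw [hWfst (G z)]
      exact hc3
    · rw [hWsnd (G z)]
      have h4a : R (adjB (S' ((G z).fst))) + R (adjB (S' (B (R ((G z).snd)))))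
          = R (adjB z.fst) := by
        rw [← map_add, ← map_add, ← map_add, hsum z, hS'Sv]
      calc R (adjB (S' ((G z).fst)))
            + (R ((G z).snd) + R (adjB (S' (B (R ((G z).snd))))))
          = (R (adjB (S' ((G z).fst))) + R (adjB (S' (B (R ((G z).snd))))))
            + R ((G z).snd) := by abel
        _ = R (adjB z.fst) + (z.snd - R (adjB z.fst)) := by rw [h4a, hg2 z]
        _ = z.snd := by abel
  exact ⟨⟨G, W, hGW, hWG⟩, rfl⟩
end

section
/- (Spectral-free interval between the diagonal entries; claim proved in Corollary 2.2.) Suppose H₁ ≠ {0} and H₂ ≠ {0}, and let c = max σ(C). If λ ∈ ℝ satisfies c < λ < min σ(A), then λ ∉ σ(M); that is, the open interval (max σ(C), min σ(A)) is contained in the resolvent set of M. -/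
open ContinuousLinearMap

variable {H₁ H₂ : Type*}
  [NormedAddCommGroup H₁] [InnerProductSpace ℂ H₁] [CompleteSpace H₁]
  [NormedAddCommGroup H₂] [InnerProductSpace ℂ H₂] [CompleteSpace H₂]

section Aux

variable {H : Type*} [NormedAddCommGroup H] [InnerProductSpace ℂ H] [CompleteSpace H]

omit [CompleteSpace H] in
lemma re_smul_one_inner (t : ℝ) (x : H) :
    RCLike.re (inner ℂ (t • x) x : ℂ) = t * ‖x‖ ^ 2 := by
  rw [RCLike.real_smul_eq_coe_smul (K := ℂ), inner_smul_left, inner_self_eq_norm_sq_to_K]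
  simp [← Complex.ofReal_pow]

lemma sInf_spectrum_mul_le_re_inner (A : H →L[ℂ] H) (hA : IsSelfAdjoint A) (x : H) :
    sInf (spectrum ℝ A) * ‖x‖ ^ 2 ≤ RCLike.re (inner ℂ (A x) x : ℂ) := by
  set t := sInf (spectrum ℝ A) with ht
  have h1 : IsSelfAdjoint (A - algebraMap ℝ (H →L[ℂ] H) t) :=
    hA.sub ((IsSelfAdjoint.all t).algebraMap _)
  have hpos : (0 : H →L[ℂ] H) ≤ A - algebraMap ℝ (H →L[ℂ] H) t := by
    rw [StarOrderedRing.nonneg_iff_spectrum_nonneg (R := ℝ) _ h1]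
    intro μ hμ
    rw [← spectrum.sub_singleton_eq] at hμ
    obtain ⟨ν, hν, s, hs, rfl⟩ := hμ
    simp only [Set.mem_singleton_iff] at hs
    subst hs
    have h2 : t ≤ ν := csInf_le (spectrum.isBounded A).bddBelow hν
    simpa using sub_nonneg.mpr h2
  have key := ((ContinuousLinearMap.nonneg_iff_isPositive _).mp hpos).inner_nonneg_left x
  simp only [sub_apply, Algebra.algebraMap_eq_smul_one, smul_apply, one_apply,
    inner_sub_left, map_sub] at key
  replace key := (RCLike.nonneg_iff.mp key).1
  simp only [map_sub, ContinuousLinearMap.one_apply] at key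
  rw [re_smul_one_inner] at key
  linarith

lemma re_inner_le_sSup_spectrum_mul (C : H →L[ℂ] H) (hC : IsSelfAdjoint C) (x : H) :
    RCLike.re (inner ℂ (C x) x : ℂ) ≤ sSup (spectrum ℝ C) * ‖x‖ ^ 2 := by
  set t := sSup (spectrum ℝ C) with ht
  have h1 : IsSelfAdjoint (algebraMap ℝ (H →L[ℂ] H) t - C) :=
    ((IsSelfAdjoint.all t).algebraMap _).sub hC
  have hpos : (0 : H →L[ℂ] H) ≤ algebraMap ℝ (H →L[ℂ] H) t - C := by
    rw [StarOrderedRing.nonneg_iff_spectrum_nonneg (R := ℝ) _ h1]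
    intro μ hμ
    rw [← spectrum.singleton_sub_eq] at hμ
    obtain ⟨s, hs, ν, hν, rfl⟩ := hμ
    simp only [Set.mem_singleton_iff] at hs
    subst hs
    have h2 : ν ≤ t := le_csSup (spectrum.isBounded C).bddAbove hν
    simpa using sub_nonneg.mpr h2
  have key := ((ContinuousLinearMap.nonneg_iff_isPositive _).mp hpos).inner_nonneg_left x
  simp only [sub_apply, Algebra.algebraMap_eq_smul_one, smul_apply, one_apply,
    inner_sub_left, map_sub] at key
  replace key := (RCLike.nonneg_iff.mp key).1
  simp only [map_sub, ContinuousLinearMap.one_apply] at key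
  rw [re_smul_one_inner] at key
  linarith

end Aux

/-- The open interval `(max σ(C), min σ(A))` lies in the resolvent set of `M`. -/
theorem resolvent_between_diagonal_entries [Nontrivial H₁] [Nontrivial H₂]
    (A : H₁ →L[ℂ] H₁) (hA : IsSelfAdjoint A)
    (C : H₂ →L[ℂ] H₂) (hC : IsSelfAdjoint C) (B : H₂ →L[ℂ] H₁)
    (lam : ℝ) (h1 : sSup (spectrum ℝ C) < lam) (h2 : lam < sInf (spectrum ℝ A)) :
    lam ∉ spectrum ℝ (blockOp A B C) := by
  set e := WithLp.prodContinuousLinearEquiv 2 ℂ H₁ H₂ with he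
  set M := blockOp A B C with hM
  set J : WithLp 2 (H₁ × H₂) →L[ℂ] WithLp 2 (H₁ × H₂) :=
    (e.symm : (H₁ × H₂) →L[ℂ] WithLp 2 (H₁ × H₂)) ∘L
      ((ContinuousLinearMap.fst ℂ H₁ H₂).prod (-(ContinuousLinearMap.snd ℂ H₁ H₂))) ∘L
      (e : WithLp 2 (H₁ × H₂) →L[ℂ] (H₁ × H₂)) with hJ
  have hJJ : J * J = 1 := by
    ext z
    show (J (J z)) = z
    simp [hJ]
  set δ : ℝ := min (sInf (spectrum ℝ A) - lam) (lam - sSup (spectrum ℝ C)) with hδ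
  have hδpos : 0 < δ := lt_min (by linarith) (by linarith)
  set N := J ∘L (M - algebraMap ℝ _ lam) with hN
  have hbound : ∀ z : WithLp 2 (H₁ × H₂),
      ‖z‖ ^ 2 * ((⟨δ, hδpos.le⟩ : NNReal) : ℝ) ≤ ‖(inner ℂ (N z) z : ℂ)‖ := by
    intro z
    set x := z.fst with hx
    set y := z.snd with hy
    have hNz : N z = (WithLp.equiv 2 (H₁ × H₂)).symm
        (A x + B y - lam • x, -(ContinuousLinearMap.adjoint B x + C y - lam • y)) := by
      simp only [hN, comp_apply, sub_apply, Algebra.algebraMap_eq_smul_one, smul_apply, one_apply]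
      rfl
    have hinner : (inner ℂ (N z) z : ℂ) =
        inner ℂ (A x + B y - lam • x) x + inner ℂ (-(ContinuousLinearMap.adjoint B x + C y - lam • y)) y := by
      rw [hNz]; rfl
    have hcross : RCLike.re (inner ℂ (ContinuousLinearMap.adjoint B x) y : ℂ)
        = RCLike.re (inner ℂ (B y) x : ℂ) := by
      rw [ContinuousLinearMap.adjoint_inner_left, inner_re_symm]
    have hAx := sInf_spectrum_mul_le_re_inner A hA x
    have hCy := re_inner_le_sSup_spectrum_mul C hC y
    have hnorm : ‖z‖ ^ 2 = ‖x‖ ^ 2 + ‖y‖ ^ 2 := WithLp.prod_norm_sq_eq_of_L2 z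
    have hre : δ * ‖z‖ ^ 2 ≤ RCLike.re (inner ℂ (N z) z : ℂ) := by
      rw [hinner]
      simp only [inner_sub_left, inner_add_left, inner_neg_left, map_sub, map_add, map_neg,
        re_smul_one_inner]
      rw [hcross, hnorm]
      have hd1 : δ ≤ sInf (spectrum ℝ A) - lam := min_le_left _ _
      have hd2 : δ ≤ lam - sSup (spectrum ℝ C) := min_le_right _ _
      nlinarith [sq_nonneg ‖x‖, sq_nonneg ‖y‖]
    calc ‖z‖ ^ 2 * ((⟨δ, hδpos.le⟩ : NNReal) : ℝ) = δ * ‖z‖ ^ 2 := by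
          simp [mul_comm]
      _ ≤ RCLike.re (inner ℂ (N z) z : ℂ) := hre
      _ ≤ ‖(inner ℂ (N z) z : ℂ)‖ := RCLike.re_le_norm _
  have hNunit : IsUnit N :=
    isUnit_of_forall_le_norm_inner_map N (c := ⟨δ, hδpos.le⟩) (by exact_mod_cast hδpos) hbound
  have hJunit : IsUnit J := ⟨⟨J, J, hJJ, hJJ⟩, rfl⟩
  have hfact : M - algebraMap ℝ _ lam = J * N := by
    rw [hN]
    show M - algebraMap ℝ _ lam = J * (J * (M - algebraMap ℝ _ lam))
    rw [← mul_assoc, hJJ, one_mul]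
  rw [spectrum.notMem_iff, ← neg_sub]
  exact (hfact ▸ (hJunit.mul hNunit)).neg
end

section
/- (Schur complement characterisation of the spectrum, bounded-entry case.) For every λ ∈ ℂ with λ ∉ σ(C), the Schur complement S(λ) = A − λI − B(C − λI)⁻¹B* is a well-defined bounded operator on H₁, and λ ∈ σ(M) if and only if S(λ) is not boundedly invertible. In particular σ(S) ∩ ρ(C) = σ(M) ∩ ρ(C), where σ(S) = {λ ∈ ρ(C) : 0 ∈ σ(S(λ))}. -/
open ContinuousLinearMap

variable {H₁ H₂ : Type*}
  [NormedAddCommGroup H₁] [InnerProductSpace ℂ H₁] [CompleteSpace H₁]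
  [NormedAddCommGroup H₂] [InnerProductSpace ℂ H₂] [CompleteSpace H₂]

/-- The first Schur complement `S(λ) = A - λ I - B (C - λ I)⁻¹ B*` (for `λ ∉ σ(C)`;
`Ring.inverse` is junk otherwise). -/
noncomputable def schurC (A : H₁ →L[ℂ] H₁) (B : H₂ →L[ℂ] H₁) (C : H₂ →L[ℂ] H₂)
    (lam : ℂ) : H₁ →L[ℂ] H₁ :=
  A - lam • 1 - B ∘L (Ring.inverse (C - lam • 1)) ∘L (ContinuousLinearMap.adjoint B)

lemma key_core (A : H₁ →L[ℂ] H₁) (B : H₂ →L[ℂ] H₁) (C : H₂ →L[ℂ] H₂) (lam : ℂ)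
    (hCu : IsUnit (C - lam • 1)) :
    IsUnit (((A ∘L fst ℂ H₁ H₂ + B ∘L snd ℂ H₁ H₂).prod
      ((adjoint B) ∘L fst ℂ H₁ H₂ + C ∘L snd ℂ H₁ H₂))
      - lam • (1 : (H₁ × H₂) →L[ℂ] (H₁ × H₂))) ↔
    IsUnit (A - lam • 1 - B ∘L (Ring.inverse (C - lam • 1)) ∘L (adjoint B)) := by
  set R : H₂ →L[ℂ] H₂ := Ring.inverse (C - lam • 1) with hRdef
  set S : H₁ →L[ℂ] H₁ := A - lam • 1 - B ∘L R ∘L (adjoint B) with hSdef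
  have hR1 : ∀ z, C (R z) - lam • R z = z := fun z => by
    have := DFunLike.congr_fun (Ring.mul_inverse_cancel _ hCu) z
    simpa [mul_def] using this
  have hR2 : ∀ z, R (C z) - lam • R z = z := fun z => by
    have := DFunLike.congr_fun (Ring.inverse_mul_cancel _ hCu) z
    simpa [mul_def] using this
  set Bs := adjoint B
  set U : (H₁ × H₂) →L[ℂ] (H₁ × H₂) := (fst ℂ H₁ H₂ + (B ∘L R) ∘L snd ℂ H₁ H₂).prod (snd ℂ H₁ H₂) with hUdef
  set U' : (H₁ × H₂) →L[ℂ] (H₁ × H₂) := (fst ℂ H₁ H₂ - (B ∘L R) ∘L snd ℂ H₁ H₂).prod (snd ℂ H₁ H₂) with hU'def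
  set L : (H₁ × H₂) →L[ℂ] (H₁ × H₂) := (fst ℂ H₁ H₂).prod ((R ∘L Bs) ∘L fst ℂ H₁ H₂ + snd ℂ H₁ H₂) with hLdef
  set L' : (H₁ × H₂) →L[ℂ] (H₁ × H₂) := (fst ℂ H₁ H₂).prod (-((R ∘L Bs) ∘L fst ℂ H₁ H₂) + snd ℂ H₁ H₂) with hL'def
  set D : (H₁ × H₂) →L[ℂ] (H₁ × H₂) := (S ∘L fst ℂ H₁ H₂).prod ((C - lam • 1) ∘L snd ℂ H₁ H₂) with hDdef
  have hU : IsUnit U := by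
    refine isUnit_iff_exists.2 ⟨U', ?_, ?_⟩ <;>
      · ext x <;> simp [hUdef, hU'def, mul_def]
  have hL : IsUnit L := by
    refine isUnit_iff_exists.2 ⟨L', ?_, ?_⟩ <;>
      · ext x <;> simp [hLdef, hL'def, mul_def]
  have hfact : ((A ∘L fst ℂ H₁ H₂ + B ∘L snd ℂ H₁ H₂).prod
      (Bs ∘L fst ℂ H₁ H₂ + C ∘L snd ℂ H₁ H₂))
      - lam • (1 : (H₁ × H₂) →L[ℂ] (H₁ × H₂)) = U * D * L := by
    ext x <;>
      simp [hUdef, hDdef, hLdef, mul_def, hSdef, map_sub, map_smul, map_add, hR1, hR2, smul_sub] <;>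
      (conv_lhs => rw [← hR2 x]) <;> rw [map_sub, map_smul]
  have hD : IsUnit D ↔ IsUnit S := by
    constructor
    · rintro ⟨u, hu⟩
      have hDi1 : (↑u⁻¹ : (H₁ × H₂) →L[ℂ] (H₁ × H₂)) * D = 1 := by
        rw [← hu]; exact u.inv_mul
      have hDi2 : D * (↑u⁻¹ : (H₁ × H₂) →L[ℂ] (H₁ × H₂)) = 1 := by
        rw [mul_def] at *; rw [← hu]; exact u.mul_inv
      refine isUnit_iff_exists.2
        ⟨fst ℂ H₁ H₂ ∘L (↑u⁻¹ : (H₁ × H₂) →L[ℂ] (H₁ × H₂)) ∘L inl ℂ H₁ H₂, ?_, ?_⟩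
      · -- S * (fst ∘ u⁻¹ ∘ inl) = 1 : use  S (fst (u⁻¹ (x,0))) = fst (D (u⁻¹ (x,0))) = fst (x,0) = x
        ext x
        have h2 := DFunLike.congr_fun hDi2 ((x, (0:H₂)) : H₁ × H₂)
        have h3 : (D ((↑u⁻¹ : (H₁ × H₂) →L[ℂ] (H₁ × H₂)) (x, 0))).1
            = S (((↑u⁻¹ : (H₁ × H₂) →L[ℂ] (H₁ × H₂)) (x, 0)).1) := by
          simp [hDdef]
        simp only [mul_def, coe_comp', Function.comp_apply, one_apply, inl_apply, coe_fst'] at h2 ⊢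
        rw [← h3, h2]
        rfl
      · -- (fst ∘ u⁻¹ ∘ inl) * S = 1 : use u⁻¹ (D (x,0)) = (x,0) and D(x,0) = (Sx,0)
        ext x
        have h1 : D ((x, (0:H₂)) : H₁ × H₂) = (S x, 0) := by simp [hDdef]
        have h2 := DFunLike.congr_fun hDi1 ((x, (0:H₂)) : H₁ × H₂)
        simp only [mul_def, coe_comp', Function.comp_apply, one_apply, inl_apply, coe_fst'] at h2 ⊢
        rw [← h1, h2]
        rfl
    · rintro ⟨u, hu⟩
      have hS1 : ∀ z, S ((↑u⁻¹ : H₁ →L[ℂ] H₁) z) = z := fun z => by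
        have : S * (↑u⁻¹ : H₁ →L[ℂ] H₁) = 1 := by rw [← hu]; exact u.mul_inv
        have := DFunLike.congr_fun this z
        simpa [mul_def] using this
      have hS2 : ∀ z, (↑u⁻¹ : H₁ →L[ℂ] H₁) (S z) = z := fun z => by
        have : (↑u⁻¹ : H₁ →L[ℂ] H₁) * S = 1 := by rw [← hu]; exact u.inv_mul
        have := DFunLike.congr_fun this z
        simpa [mul_def] using this
      refine isUnit_iff_exists.2
        ⟨((↑u⁻¹ : H₁ →L[ℂ] H₁) ∘L fst ℂ H₁ H₂).prod (R ∘L snd ℂ H₁ H₂), ?_, ?_⟩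
      · ext x <;> simp [hDdef, mul_def, hS1, hR1, map_sub, map_smul]
      · ext x <;> simp [hDdef, mul_def, hS2, hR2, map_sub, map_smul]
  obtain ⟨uU, huU⟩ := hU
  obtain ⟨uL, huL⟩ := hL
  rw [hfact, ← huU, ← huL, Units.isUnit_mul_units, Units.isUnit_units_mul, hD, hSdef]


lemma isUnit_conj_aux {E F : Type*} [NormedAddCommGroup E] [NormedSpace ℂ E]
    [NormedAddCommGroup F] [NormedSpace ℂ F] (e : E ≃L[ℂ] F) (T : F →L[ℂ] F)
    (hT : IsUnit T) :
    IsUnit ((e.symm : F →L[ℂ] E) ∘L T ∘L (e : E →L[ℂ] F)) := by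
  obtain ⟨u, rfl⟩ := hT
  refine isUnit_iff_exists.2
    ⟨(e.symm : F →L[ℂ] E) ∘L (↑u⁻¹ : F →L[ℂ] F) ∘L (e : E →L[ℂ] F), ?_, ?_⟩
  · have h : (↑u : F →L[ℂ] F) ∘L (↑u⁻¹ : F →L[ℂ] F) = 1 := u.mul_inv
    ext x
    have := DFunLike.congr_fun h (e x)
    simp only [mul_def, coe_comp', Function.comp_apply, one_apply] at this ⊢
    simp [this]
  · have h : (↑u⁻¹ : F →L[ℂ] F) ∘L (↑u : F →L[ℂ] F) = 1 := u.inv_mul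
    ext x
    have := DFunLike.congr_fun h (e x)
    simp only [mul_def, coe_comp', Function.comp_apply, one_apply] at this ⊢
    simp [this]

lemma isUnit_conj {E F : Type*} [NormedAddCommGroup E] [NormedSpace ℂ E]
    [NormedAddCommGroup F] [NormedSpace ℂ F] (e : E ≃L[ℂ] F) (T : F →L[ℂ] F) :
    IsUnit ((e.symm : F →L[ℂ] E) ∘L T ∘L (e : E →L[ℂ] F)) ↔ IsUnit T := by
  refine ⟨fun h => ?_, isUnit_conj_aux e T⟩
  have := isUnit_conj_aux e.symm _ h
  convert this using 1
  ext x
  simp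

/-- The main equivalence. -/
lemma key_blockOp (A : H₁ →L[ℂ] H₁) (B : H₂ →L[ℂ] H₁) (C : H₂ →L[ℂ] H₂) (lam : ℂ)
    (hlam : lam ∉ spectrum ℂ C) :
    lam ∈ spectrum ℂ (blockOp A B C) ↔ ¬ IsUnit (schurC A B C lam) := by
  have hCu : IsUnit (C - lam • 1) := by
    have := spectrum.notMem_iff.mp hlam
    rw [Algebra.algebraMap_eq_smul_one] at this
    simpa using this.neg
  rw [spectrum.mem_iff, Algebra.algebraMap_eq_smul_one]
  have h1 : lam • (1 : WithLp 2 (H₁ × H₂) →L[ℂ] WithLp 2 (H₁ × H₂)) - blockOp A B C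
      = -(((WithLp.prodContinuousLinearEquiv 2 ℂ H₁ H₂).symm :
            (H₁ × H₂) →L[ℂ] WithLp 2 (H₁ × H₂)) ∘L
          (((A ∘L fst ℂ H₁ H₂ + B ∘L snd ℂ H₁ H₂).prod
            ((adjoint B) ∘L fst ℂ H₁ H₂ + C ∘L snd ℂ H₁ H₂))
            - lam • (1 : (H₁ × H₂) →L[ℂ] (H₁ × H₂))) ∘L
          ((WithLp.prodContinuousLinearEquiv 2 ℂ H₁ H₂) :
            WithLp 2 (H₁ × H₂) →L[ℂ] (H₁ × H₂))) := by
    ext x <;> simp [blockOp, WithLp.prodContinuousLinearEquiv] <;> abel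
  rw [h1]
  exact not_congr ((IsUnit.neg_iff _).trans
    ((isUnit_conj _ _).trans (key_core A B C lam hCu)))


/-- Schur complement characterisation of the spectrum (bounded-entry case):
for `λ ∉ σ(C)`, `λ ∈ σ(M)` iff `S(λ)` is not boundedly invertible; in particular
`σ(S) ∩ ρ(C) = σ(M) ∩ ρ(C)`. -/
theorem schur_spectrum_characterisation
    (A : H₁ →L[ℂ] H₁) (hA : IsSelfAdjoint A)
    (C : H₂ →L[ℂ] H₂) (hC : IsSelfAdjoint C) (B : H₂ →L[ℂ] H₁) :
    (∀ lam : ℂ, lam ∉ spectrum ℂ C →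
      (lam ∈ spectrum ℂ (blockOp A B C) ↔ ¬ IsUnit (schurC A B C lam))) ∧
    {lam : ℂ | lam ∉ spectrum ℂ C ∧ (0 : ℂ) ∈ spectrum ℂ (schurC A B C lam)} =
      spectrum ℂ (blockOp A B C) ∩ (spectrum ℂ C)ᶜ := by
  refine ⟨fun lam hlam => key_blockOp A B C lam hlam, ?_⟩
  ext lam
  simp only [Set.mem_setOf_eq, Set.mem_inter_iff, Set.mem_compl_iff]
  constructor
  · rintro ⟨h1, h2⟩
    rw [spectrum.zero_mem_iff ℂ] at h2
    exact ⟨(key_blockOp A B C lam h1).2 h2, h1⟩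
  · rintro ⟨h1, h2⟩
    exact ⟨h2, (spectrum.zero_mem_iff ℂ).2 ((key_blockOp A B C lam h2).1 h1)⟩
end

section
/- (Block formula (1.8) for the resolvent, bounded-entry case.) Let α ∈ ℂ with α ∉ σ(C) and α ∉ σ(M). Then the Schur complement S(α) = A − αI − B(C − αI)⁻¹B* is boundedly invertible, and for all (x, y) ∈ H₁ ⊕ H₂ one has (M − αI)⁻¹(x, y) = ( S(α)⁻¹x − S(α)⁻¹B(C − αI)⁻¹y , −(C − αI)⁻¹B*S(α)⁻¹x + (C − αI)⁻¹y + (C − αI)⁻¹B*S(α)⁻¹B(C − αI)⁻¹y ). -/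
open ContinuousLinearMap

variable {H₁ H₂ : Type*}
  [NormedAddCommGroup H₁] [InnerProductSpace ℂ H₁] [CompleteSpace H₁]
  [NormedAddCommGroup H₂] [InnerProductSpace ℂ H₂] [CompleteSpace H₂]

set_option maxHeartbeats 1600000 in
/-- Block formula (1.8) for the resolvent (bounded-entry case). -/
theorem resolvent_block_formula
    (A : H₁ →L[ℂ] H₁) (hA : IsSelfAdjoint A)
    (C : H₂ →L[ℂ] H₂) (hC : IsSelfAdjoint C) (B : H₂ →L[ℂ] H₁)
    (α : ℂ) (hαC : α ∉ spectrum ℂ C) (hαM : α ∉ spectrum ℂ (blockOp A B C)) :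
    IsUnit (schurC A B C α) ∧
    ∀ (x : H₁) (y : H₂),
      Ring.inverse (blockOp A B C - α • 1)
          ((WithLp.prodContinuousLinearEquiv 2 ℂ H₁ H₂).symm (x, y)) =
        (WithLp.prodContinuousLinearEquiv 2 ℂ H₁ H₂).symm
          (Ring.inverse (schurC A B C α) x -
              Ring.inverse (schurC A B C α) (B (Ring.inverse (C - α • 1) y)),
            -(Ring.inverse (C - α • 1)
                (ContinuousLinearMap.adjoint B (Ring.inverse (schurC A B C α) x))) +
              Ring.inverse (C - α • 1) y +
              Ring.inverse (C - α • 1)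
                (ContinuousLinearMap.adjoint B
                  (Ring.inverse (schurC A B C α) (B (Ring.inverse (C - α • 1) y))))) := by
  
  classical
  set e := (WithLp.prodContinuousLinearEquiv 2 ℂ H₁ H₂) with he
  set F : (H₁ × H₂) →L[ℂ] (H₁ × H₂) :=
    ((A ∘L ContinuousLinearMap.fst ℂ H₁ H₂ + B ∘L ContinuousLinearMap.snd ℂ H₁ H₂).prod
      ((ContinuousLinearMap.adjoint B) ∘L ContinuousLinearMap.fst ℂ H₁ H₂
        + C ∘L ContinuousLinearMap.snd ℂ H₁ H₂)) with hFdef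
  -- units from the spectral assumptions
  have hCU : IsUnit (C - α • (1 : H₂ →L[ℂ] H₂)) := by
    have h := spectrum.notMem_iff.mp hαC
    rw [Algebra.algebraMap_eq_smul_one] at h
    simpa [neg_sub] using h.neg
  have hMU : IsUnit (blockOp A B C - α • 1) := by
    have h := spectrum.notMem_iff.mp hαM
    rw [Algebra.algebraMap_eq_smul_one] at h
    simpa [neg_sub] using h.neg
  set Ci := Ring.inverse (C - α • (1 : H₂ →L[ℂ] H₂)) with hCi
  have hCCi : ∀ z, (C - α • (1 : H₂ →L[ℂ] H₂)) (Ci z) = z := by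
    intro z
    have h := Ring.mul_inverse_cancel _ hCU
    calc (C - α • (1 : H₂ →L[ℂ] H₂)) (Ci z)
        = (((C - α • (1 : H₂ →L[ℂ] H₂)) * Ci)) z := rfl
      _ = z := by rw [h]; rfl
  have hCiC : ∀ z, Ci ((C - α • (1 : H₂ →L[ℂ] H₂)) z) = z := by
    intro z
    have h := Ring.inverse_mul_cancel _ hCU
    calc Ci ((C - α • (1 : H₂ →L[ℂ] H₂)) z)
        = ((Ci * (C - α • (1 : H₂ →L[ℂ] H₂)))) z := rfl
      _ = z := by rw [h]; rfl
  -- pointwise descriptions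
  have hblock : ∀ z, blockOp A B C z = e.symm (F (e z)) := fun _ => rfl
  have key : ∀ z, (blockOp A B C - α • 1) z = e.symm ((F - α • 1) (e z)) := by
    intro z
    simp only [ContinuousLinearMap.sub_apply, ContinuousLinearMap.smul_apply,
      ContinuousLinearMap.one_apply, map_sub, map_smul, hblock,
      ContinuousLinearEquiv.symm_apply_apply]
  set NL : (H₁ × H₂) →L[ℂ] (H₁ × H₂) :=
    (e : WithLp 2 (H₁ × H₂) →L[ℂ] H₁ × H₂) ∘L
      Ring.inverse (blockOp A B C - α • 1) ∘L
        (e.symm : (H₁ × H₂) →L[ℂ] WithLp 2 (H₁ × H₂)) with hNL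
  have hNLapp : ∀ p, NL p = e (Ring.inverse (blockOp A B C - α • 1) (e.symm p)) :=
    fun _ => rfl
  have hFN : ∀ p, (F - α • 1) (NL p) = p := by
    intro p
    apply e.symm.injective
    rw [hNLapp, ← key, ← ContinuousLinearMap.mul_apply,
      Ring.mul_inverse_cancel _ hMU, ContinuousLinearMap.one_apply]
  have hNF : ∀ p, NL ((F - α • 1) p) = p := by
    intro p
    have h2 : e.symm ((F - α • 1) p) = (blockOp A B C - α • 1) (e.symm p) := by
      rw [key, ContinuousLinearEquiv.apply_symm_apply]
    rw [hNLapp, h2, ← ContinuousLinearMap.mul_apply,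
      Ring.inverse_mul_cancel _ hMU, ContinuousLinearMap.one_apply,
      ContinuousLinearEquiv.apply_symm_apply]
  have hFS : ∀ p : H₁ × H₂, (F - α • 1) p =
      ((A - α • 1) p.1 + B p.2, ContinuousLinearMap.adjoint B p.1 + (C - α • 1) p.2) := by
    intro p
    simp only [hFdef, ContinuousLinearMap.sub_apply, ContinuousLinearMap.smul_apply,
      ContinuousLinearMap.one_apply, ContinuousLinearMap.prod_apply,
      ContinuousLinearMap.add_apply, ContinuousLinearMap.comp_apply,
      ContinuousLinearMap.coe_fst', ContinuousLinearMap.coe_snd', Prod.smul_fst,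
      Prod.smul_snd, Prod.mk_sub_mk, Prod.ext_iff]
    constructor <;> · simp only [Prod.fst_sub, Prod.snd_sub, Prod.smul_fst, Prod.smul_snd]; abel
  have hSapp : ∀ z, schurC A B C α z =
      (A - α • 1) z - B (Ci (ContinuousLinearMap.adjoint B z)) := by
    intro z
    simp [schurC, ContinuousLinearMap.sub_apply, ContinuousLinearMap.comp_apply, hCi]
  -- the candidate inverse of the Schur complement
  set Si : H₁ →L[ℂ] H₁ :=
    ContinuousLinearMap.fst ℂ H₁ H₂ ∘L NL ∘L ContinuousLinearMap.inl ℂ H₁ H₂ with hSidef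
  have hSiapp : ∀ x, Si x = (NL (x, 0)).1 := fun _ => rfl
  clear_value e F Ci NL Si
  clear he hFdef hCi hNL hSidef hblock
  have h1 : ∀ x : H₁, schurC A B C α (Si x) = x := by
    intro x
    have h := hFN (x, 0)
    rw [hFS] at h
    rw [Prod.mk.injEq] at h
    obtain ⟨h₁, h₂⟩ := h
    have hv : (NL (x, 0)).2 = -(Ci (ContinuousLinearMap.adjoint B (NL (x, 0)).1)) := by
      have : (C - α • 1) (NL (x, 0)).2 = -(ContinuousLinearMap.adjoint B (NL (x, 0)).1) :=
        eq_neg_of_add_eq_zero_right h₂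
      have := congrArg Ci this
      rw [hCiC] at this
      rw [this, map_neg]
    rw [hSapp, hSiapp, sub_eq_add_neg, ← map_neg B, ← hv]
    exact h₁
  have h2 : ∀ x : H₁, Si (schurC A B C α x) = x := by
    intro x
    have hpre : (F - α • 1) (x, -(Ci (ContinuousLinearMap.adjoint B x))) =
        (schurC A B C α x, 0) := by
      rw [hFS]
      refine Prod.ext ?_ ?_
      · simp only [hSapp, map_neg]; abel
      · simp only [map_neg, hCCi]; abel
    have h := hNF (x, -(Ci (ContinuousLinearMap.adjoint B x)))
    rw [hpre] at h
    rw [hSiapp, h]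
  have hSU : IsUnit (schurC A B C α) := by
    refine isUnit_iff_exists.mpr ⟨Si, ?_, ?_⟩
    · ext x
      simpa using h1 x
    · ext x
      simpa using h2 x
  have hSi : Ring.inverse (schurC A B C α) = Si := by
    have hm : schurC A B C α * Si = 1 := by ext x; simpa using h1 x
    calc Ring.inverse (schurC A B C α)
        = Ring.inverse (schurC A B C α) * (schurC A B C α * Si) := by rw [hm, mul_one]
      _ = (Ring.inverse (schurC A B C α) * schurC A B C α) * Si := by rw [mul_assoc]
      _ = Si := by rw [Ring.inverse_mul_cancel _ hSU, one_mul]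
  refine ⟨hSU, fun x y => ?_⟩
  have hL : Ring.inverse (blockOp A B C - α • 1) (e.symm (x, y)) = e.symm (NL (x, y)) := by
    rw [hNLapp, ContinuousLinearEquiv.symm_apply_apply]
  rw [hL, hSi]
  congr 1
  set b := B (Ci y) with hb
  have hpre : (F - α • 1)
      (Si x - Si b,
        -(Ci (ContinuousLinearMap.adjoint B (Si x))) + Ci y +
          Ci (ContinuousLinearMap.adjoint B (Si b))) = (x, y) := by
    rw [hFS]
    refine Prod.ext ?_ ?_
    · have e1 : (A - α • 1) (Si x) = x + B (Ci (ContinuousLinearMap.adjoint B (Si x))) := by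
        have h' := h1 x
        rw [hSapp] at h'
        exact sub_eq_iff_eq_add.mp h'
      have e2 : (A - α • 1) (Si b) = b + B (Ci (ContinuousLinearMap.adjoint B (Si b))) := by
        have h' := h1 b
        rw [hSapp] at h'
        exact sub_eq_iff_eq_add.mp h'
      simp only [map_sub, map_add, map_neg, e1, e2]
      simp only [hb]
      abel
    · simp only [map_sub, map_add, map_neg, hCCi]
      abel
  have h := hNF (Si x - Si b,
        -(Ci (ContinuousLinearMap.adjoint B (Si x))) + Ci y +
          Ci (ContinuousLinearMap.adjoint B (Si b)))
  rw [hpre] at h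
  rw [h]
end

section
/- (Key estimate from the proof of Theorem 3.1.) Suppose a, b ≥ 0 satisfy ‖B*x‖² ≤ a·Re⟨Ax, x⟩ + b·‖x‖² for all x ∈ H₁. Let α ∈ ℝ with α ∉ σ(A), and let |A − αI|^{-1/2} denote the bounded self-adjoint operator obtained by applying the continuous functional calculus of A to the function t ↦ |t − α|^{-1/2} (continuous on σ(A)). Then for every x ∈ H₁, ‖B* |A − αI|^{-1/2} x‖² ≤ ( a + |aα + b| / dist[α, σ(A)] ) · ‖x‖². -/
open ContinuousLinearMap

variable {H₁ H₂ : Type*}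
  [NormedAddCommGroup H₁] [InnerProductSpace ℂ H₁] [CompleteSpace H₁]
  [NormedAddCommGroup H₂] [InnerProductSpace ℂ H₂] [CompleteSpace H₂]

/-- Key estimate from the proof of Theorem 3.1:
`‖B* |A - αI|^{-1/2} x‖² ≤ (a + |aα + b| / dist[α, σ(A)]) ‖x‖²`, where
`|A - αI|^{-1/2}` is given by the continuous functional calculus of `A` applied to
`t ↦ |t - α|^{-1/2}`. -/
theorem adjoint_comp_inv_sqrt_estimate
    (A : H₁ →L[ℂ] H₁) (hA : IsSelfAdjoint A) (B : H₂ →L[ℂ] H₁)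
    (a b : ℝ) (ha : 0 ≤ a) (hb : 0 ≤ b)
    (hab : ∀ x : H₁, ‖ContinuousLinearMap.adjoint B x‖ ^ 2 ≤
      a * (inner ℂ (A x) x : ℂ).re + b * ‖x‖ ^ 2)
    (α : ℝ) (hα : α ∉ spectrum ℝ A) (x : H₁) :
    ‖ContinuousLinearMap.adjoint B
        (cfc (fun t : ℝ => (Real.sqrt |t - α|)⁻¹) A x)‖ ^ 2 ≤
      (a + |a * α + b| / Metric.infDist α (spectrum ℝ A)) * ‖x‖ ^ 2 := by
  rcases subsingleton_or_nontrivial H₁ with hH | hH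
  · have hx : x = 0 := Subsingleton.elim x 0
    have hd : 0 ≤ |a * α + b| / Metric.infDist α (spectrum ℝ A) :=
      div_nonneg (abs_nonneg _) Metric.infDist_nonneg
    simp only [hx, map_zero, norm_zero]
    nlinarith
  -- setup
  set d := Metric.infDist α (spectrum ℝ A) with hd_def
  have hσne : (spectrum ℝ A).Nonempty := hA.spectrum_nonempty
  have hσcl : IsClosed (spectrum ℝ A) := spectrum.isClosed A
  have hd_pos : 0 < d := (hσcl.notMem_iff_infDist_pos hσne).mp hα
  have hd_le : ∀ t ∈ spectrum ℝ A, d ≤ |t - α| := by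
    intro t ht
    calc d ≤ dist α t := Metric.infDist_le_dist_of_mem ht
    _ = |t - α| := by rw [Real.dist_eq, abs_sub_comm]
  set f : ℝ → ℝ := fun t => (Real.sqrt |t - α|)⁻¹ with hf_def
  have hne : ∀ t ∈ spectrum ℝ A, Real.sqrt |t - α| ≠ 0 := fun t ht =>
    ne_of_gt (Real.sqrt_pos.mpr (lt_of_lt_of_le hd_pos (hd_le t ht)))
  have hf_cont : ContinuousOn f (spectrum ℝ A) :=
    ContinuousOn.inv₀ ((continuous_abs.comp (continuous_sub_right α)).sqrt.continuousOn) hne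
  have hh_cont : ContinuousOn (fun t : ℝ => (t - α) * f t) (spectrum ℝ A) :=
    ((continuous_sub_right α).continuousOn).mul hf_cont
  set T : H₁ →L[ℂ] H₁ := cfc f A with hT_def
  have hT_sa : IsSelfAdjoint T := cfc_predicate f A
  -- norm of T
  have hT_norm : ‖T‖ ≤ (Real.sqrt d)⁻¹ := by
    apply norm_cfc_le (by positivity)
    intro t ht
    rw [Real.norm_eq_abs, abs_of_nonneg (by positivity)]
    exact inv_anti₀ (Real.sqrt_pos.mpr hd_pos)
      (Real.sqrt_le_sqrt (hd_le t ht))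
  have hTx_sq : ‖T x‖ ^ 2 ≤ d⁻¹ * ‖x‖ ^ 2 := by
    have h1 : ‖T x‖ ≤ (Real.sqrt d)⁻¹ * ‖x‖ :=
      (T.le_opNorm x).trans (by gcongr)
    have h2 : ((Real.sqrt d)⁻¹) ^ 2 = d⁻¹ := by
      rw [← Real.sqrt_inv, Real.sq_sqrt (by positivity)]
    calc ‖T x‖ ^ 2 ≤ ((Real.sqrt d)⁻¹ * ‖x‖) ^ 2 :=
          pow_le_pow_left₀ (norm_nonneg _) h1 2
    _ = d⁻¹ * ‖x‖ ^ 2 := by rw [mul_pow, h2]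
  -- the operator S
  set S : H₁ →L[ℂ] H₁ := cfc (fun t : ℝ => f t * ((t - α) * f t)) A with hS_def
  have hS_norm : ‖S‖ ≤ 1 := by
    apply norm_cfc_le zero_le_one
    intro t ht
    have h1 : |t - α| ≠ 0 := fun h => hne t ht (by rw [h, Real.sqrt_zero])
    rw [Real.norm_eq_abs]
    have hff : f t * f t = |t - α|⁻¹ := by
      rw [hf_def, ← mul_inv, Real.mul_self_sqrt (abs_nonneg _)]
    have : f t * ((t - α) * f t) = (t - α) * |t - α|⁻¹ := by
      rw [← hff]; ring
    rw [this, abs_mul, abs_inv, abs_abs, mul_inv_cancel₀ h1]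
  have hS_eq : S = T * ((A - algebraMap ℝ (H₁ →L[ℂ] H₁) α) * T) := by
    rw [hS_def, cfc_mul f _ A hf_cont hh_cont,
      cfc_mul (fun t : ℝ => t - α) f A (by fun_prop) hf_cont]
    congr 1
    rw [cfc_sub (fun t : ℝ => t) (fun _ => α) A (by fun_prop) (by fun_prop),
      cfc_id' (R := ℝ) A, cfc_const α A]
  -- key inner product identity
  have key : (inner ℂ (A (T x)) (T x) : ℂ).re
      = (inner ℂ (S x) x : ℂ).re + α * ‖T x‖ ^ 2 := by
    have h1 : (inner ℂ (S x) x : ℂ) = inner ℂ ((A - algebraMap ℝ (H₁ →L[ℂ] H₁) α) (T x)) (T x) := by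
      rw [hS_eq]
      have h0 : (T * ((A - algebraMap ℝ (H₁ →L[ℂ] H₁) α) * T)) x
          = T ((A - algebraMap ℝ (H₁ →L[ℂ] H₁) α) (T x)) := rfl
      rw [h0]
      calc (inner ℂ (T ((A - algebraMap ℝ (H₁ →L[ℂ] H₁) α) (T x))) x : ℂ)
          = inner ℂ (ContinuousLinearMap.adjoint T ((A - algebraMap ℝ (H₁ →L[ℂ] H₁) α) (T x))) x := by
            rw [hT_sa.adjoint_eq]
      _ = inner ℂ ((A - algebraMap ℝ (H₁ →L[ℂ] H₁) α) (T x)) (T x) :=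
            ContinuousLinearMap.adjoint_inner_left T x _
    have h2 : ((A - algebraMap ℝ (H₁ →L[ℂ] H₁) α) (T x)) = A (T x) - α • T x := by
      simp [Algebra.algebraMap_eq_smul_one]
    rw [h1, h2, inner_sub_left, ← algebraMap_smul ℂ α (T x), Complex.coe_algebraMap,
      inner_smul_left, Complex.conj_ofReal, inner_self_eq_norm_sq_to_K]
    simp [Complex.sub_re, Complex.mul_re, Complex.ofReal_re, Complex.ofReal_im, pow_two]
  -- put things together
  have hab' := hab (T x)
  have hSre : (inner ℂ (S x) x : ℂ).re ≤ ‖x‖ ^ 2 := by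
    calc (inner ℂ (S x) x : ℂ).re ≤ ‖(inner ℂ (S x) x : ℂ)‖ := Complex.re_le_norm _
    _ ≤ ‖S x‖ * ‖x‖ := norm_inner_le_norm _ _
    _ ≤ (1 * ‖x‖) * ‖x‖ := by
        have := (S.le_opNorm x).trans (by gcongr : ‖S‖ * ‖x‖ ≤ 1 * ‖x‖)
        gcongr
    _ = ‖x‖ ^ 2 := by ring
  have habs : (a * α + b) * ‖T x‖ ^ 2 ≤ |a * α + b| / d * ‖x‖ ^ 2 := by
    calc (a * α + b) * ‖T x‖ ^ 2 ≤ |a * α + b| * ‖T x‖ ^ 2 := by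
          gcongr; exact le_abs_self _
    _ ≤ |a * α + b| * (d⁻¹ * ‖x‖ ^ 2) := by gcongr
    _ = |a * α + b| / d * ‖x‖ ^ 2 := by ring
  calc ‖ContinuousLinearMap.adjoint B (T x)‖ ^ 2
      ≤ a * (inner ℂ (A (T x)) (T x) : ℂ).re + b * ‖T x‖ ^ 2 := hab'
    _ = a * (inner ℂ (S x) x : ℂ).re + (a * α + b) * ‖T x‖ ^ 2 := by rw [key]; ring
    _ ≤ a * ‖x‖ ^ 2 + |a * α + b| / d * ‖x‖ ^ 2 :=
        add_le_add (mul_le_mul_of_nonneg_left hSre ha) habs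
    _ = (a + |a * α + b| / d) * ‖x‖ ^ 2 := by ring
end
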